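/- arXiv:1406.6733 — 12 statements merged into one kernel-verified Lean document; each statement's English description precedes it below -/
import Mathlib

section
/- Let E be a Banach space and ℵ an uncountable cardinal. If for every cardinal κ < ℵ, every bounded operator from a closed subspace of ℓ₁(κ) into E extends to a bounded operator on ℓ₁(κ), then E is complemented in every Banach space X containing E as a closed subspace with dens(X/E) < ℵ. -/
open Cardinal

namespace Stmt0Aux

variable {I : Type} {Z : Type*} [NormedAddCommGroup Z] [NormedSpace ℝ Z] [CompleteSpace Z]

lemma lp_one_summable (f : lp (fun _ : I => ℝ) 1) : Summable fun i => ‖f i‖ := by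
  have h := Memℓp.summable (p := 1) (E := fun _ : I => ℝ) (by norm_num) (lp.memℓp f)
  simpa using h

lemma lp_one_norm (f : lp (fun _ : I => ℝ) 1) : ‖f‖ = ∑' i, ‖f i‖ := by
  have h := lp.norm_eq_tsum_rpow (p := 1) (E := fun _ : I => ℝ) (by norm_num) f
  simpa using h

lemma norm_bound_aux (x : I → Z) {C : ℝ} (hC : ∀ i, ‖x i‖ ≤ C)
    (f : lp (fun _ : I => ℝ) 1) (i : I) : ‖f i • x i‖ ≤ ‖f i‖ * C := by
  rw [norm_smul]
  exact mul_le_mul_of_nonneg_left (hC i) (norm_nonneg _)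

lemma summable_norm_smul_of_bound (x : I → Z) {C : ℝ} (hC : ∀ i, ‖x i‖ ≤ C)
    (f : lp (fun _ : I => ℝ) 1) : Summable fun i => ‖f i • x i‖ :=
  Summable.of_nonneg_of_le (fun i => norm_nonneg _) (norm_bound_aux x hC f)
    ((lp_one_summable f).mul_right C)

lemma summable_smul_of_bound (x : I → Z) {C : ℝ} (hC : ∀ i, ‖x i‖ ≤ C)
    (f : lp (fun _ : I => ℝ) 1) : Summable fun i => f i • x i :=
  (summable_norm_smul_of_bound x hC f).of_norm

/-- The canonical operator `ℓ₁(I) → Z` from a bounded family. -/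
noncomputable def phiL (x : I → Z) (C : ℝ) (hC : ∀ i, ‖x i‖ ≤ C) :
    lp (fun _ : I => ℝ) 1 →L[ℝ] Z :=
  LinearMap.mkContinuous
    { toFun := fun f => ∑' i, f i • x i
      map_add' := by
        intro f g
        have hf := summable_smul_of_bound x hC f
        have hg := summable_smul_of_bound x hC g
        simp only
        rw [← Summable.tsum_add hf hg]
        congr 1
        ext i
        rw [lp.coeFn_add, Pi.add_apply, add_smul]
      map_smul' := by
        intro c f
        simp only [RingHom.id_apply]
        rw [← Summable.tsum_const_smul c (summable_smul_of_bound x hC f)]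
        congr 1
        ext i
        rw [lp.coeFn_smul, Pi.smul_apply, smul_assoc] }
    C
    (by
      intro f
      simp only [LinearMap.coe_mk, AddHom.coe_mk]
      calc ‖∑' i, f i • x i‖ ≤ ∑' i, ‖f i • x i‖ :=
            norm_tsum_le_tsum_norm (summable_norm_smul_of_bound x hC f)
        _ ≤ ∑' i, ‖f i‖ * C :=
            Summable.tsum_le_tsum (norm_bound_aux x hC f) (summable_norm_smul_of_bound x hC f)
              ((lp_one_summable f).mul_right C)
        _ = C * ‖f‖ := by rw [lp_one_norm, tsum_mul_right, mul_comm])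

lemma phiL_apply (x : I → Z) (C : ℝ) (hC : ∀ i, ‖x i‖ ≤ C)
    (f : lp (fun _ : I => ℝ) 1) : phiL x C hC f = ∑' i, f i • x i := rfl

lemma phiL_norm_le (x : I → Z) {C : ℝ} (hC0 : 0 ≤ C) (hC : ∀ i, ‖x i‖ ≤ C) :
    ‖phiL x C hC‖ ≤ C :=
  LinearMap.mkContinuous_norm_le _ hC0 _

lemma phiL_single [DecidableEq I] (x : I → Z) (C : ℝ) (hC : ∀ i, ‖x i‖ ≤ C)
    (i : I) (c : ℝ) : phiL x C hC (lp.single 1 i c) = c • x i := by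
  rw [phiL_apply, tsum_eq_single i]
  · rw [lp.single_apply_self]
  · intro j hj
    rw [lp.single_apply_ne _ _ _ hj, zero_smul]

/-- Composing `phiL` with a continuous linear map. -/
lemma comp_phiL (x : I → Z) (C : ℝ) (hC : ∀ i, ‖x i‖ ≤ C)
    {W : Type*} [NormedAddCommGroup W] [NormedSpace ℝ W] (g : Z →L[ℝ] W)
    (f : lp (fun _ : I => ℝ) 1) :
    g (phiL x C hC f) = ∑' i, f i • g (x i) := by
  rw [phiL_apply, ContinuousLinearMap.map_tsum g (summable_smul_of_bound x hC f)]
  simp_rw [map_smul]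

end Stmt0Aux

namespace Stmt0Aux

variable {I : Type} {Z : Type*} [NormedAddCommGroup Z] [NormedSpace ℝ Z] [CompleteSpace Z]

lemma step_lemma [Nonempty I] (u : I → Z) (hu : ∀ i, ‖u i‖ ≤ 1)
    (hdense : ∀ z : Z, ‖z‖ < 1 → ∀ ε > 0, ∃ i, ‖z - u i‖ < ε) (z : Z) :
    ∃ i c, |c| ≤ 2 * ‖z‖ ∧ ‖z - c • u i‖ ≤ ‖z‖ / 2 := by
  rcases eq_or_ne z 0 with rfl | hz
  · exact ⟨Classical.arbitrary I, 0, by simp, by simp⟩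
  · have hz0 : 0 < ‖z‖ := norm_pos_iff.mpr hz
    set w := (2 * ‖z‖)⁻¹ • z with hw
    have hwn : ‖w‖ < 1 := by
      rw [hw, norm_smul, norm_inv, Real.norm_eq_abs, abs_of_pos (by linarith)]
      rw [inv_mul_eq_div, div_lt_one (by linarith)]
      linarith
    obtain ⟨i, hi⟩ := hdense w hwn (1/4) (by norm_num)
    refine ⟨i, 2 * ‖z‖, ?_, ?_⟩
    · rw [abs_of_pos (by linarith)]
    · have : z - (2 * ‖z‖) • u i = (2 * ‖z‖) • (w - u i) := by
        rw [smul_sub, hw, smul_smul]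
        rw [mul_inv_cancel₀ (by positivity), one_smul]
      rw [this, norm_smul, Real.norm_eq_abs, abs_of_pos (by positivity)]
      calc 2 * ‖z‖ * ‖w - u i‖ ≤ 2 * ‖z‖ * (1/4) := by
            exact mul_le_mul_of_nonneg_left (le_of_lt hi) (by positivity)
        _ = ‖z‖ / 2 := by ring

lemma phiL_surjective [Nonempty I] (u : I → Z) (hu : ∀ i, ‖u i‖ ≤ 1)
    (hdense : ∀ z : Z, ‖z‖ < 1 → ∀ ε > 0, ∃ i, ‖z - u i‖ < ε) :
    Function.Surjective (phiL u 1 hu) := by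
  classical
  intro z
  choose ind co hco hstep using step_lemma u hu hdense
  set g : Z → Z := fun w => w - co w • u (ind w) with hg
  set zs : ℕ → Z := fun n => g^[n] z with hzs
  have hzs0 : zs 0 = z := rfl
  have hzssucc : ∀ n, zs (n + 1) = zs n - co (zs n) • u (ind (zs n)) := by
    intro n
    show g^[n+1] z = g^[n] z - co (g^[n] z) • u (ind (g^[n] z))
    rw [Function.iterate_succ_apply']
  have hzsnorm : ∀ n, ‖zs n‖ ≤ ‖z‖ / 2 ^ n := by
    intro n
    induction n with
    | zero => simp [hzs0]
    | succ n ih =>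
      calc ‖zs (n+1)‖ ≤ ‖zs n‖ / 2 := by rw [hzssucc]; exact hstep (zs n)
        _ ≤ ‖z‖ / 2 ^ n / 2 := by linarith
        _ = ‖z‖ / 2 ^ (n+1) := by ring
  set F : ℕ → lp (fun _ : I => ℝ) 1 := fun n => lp.single 1 (ind (zs n)) (co (zs n)) with hF
  have hFnorm : ∀ n, ‖F n‖ ≤ 2 * ‖z‖ * (1/2) ^ n := by
    intro n
    rw [hF]
    have := lp.norm_single (p := 1) (E := fun _ : I => ℝ) (by norm_num)
      (ind (zs n)) (co (zs n))
    rw [this, Real.norm_eq_abs]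
    calc |co (zs n)| ≤ 2 * ‖zs n‖ := hco (zs n)
      _ ≤ 2 * (‖z‖ / 2 ^ n) := by have := hzsnorm n; linarith
      _ = 2 * ‖z‖ * (1/2)^n := by rw [div_eq_mul_inv, one_div, inv_pow]; ring
  have hFsum : Summable F := by
    refine Summable.of_norm_bounded (Summable.mul_left (2 * ‖z‖) summable_geometric_two) hFnorm
  refine ⟨∑' n, F n, ?_⟩
  rw [ContinuousLinearMap.map_tsum _ hFsum]
  have hqF : ∀ n, phiL u 1 hu (F n) = co (zs n) • u (ind (zs n)) := fun n =>
    phiL_single u 1 hu _ _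
  simp_rw [hqF]
  set G : ℕ → Z := fun n => co (zs n) • u (ind (zs n)) with hGdef
  have hGsum : Summable G := by
    refine Summable.of_norm_bounded (Summable.mul_left (2 * ‖z‖) summable_geometric_two) ?_
    intro n
    rw [hGdef]
    simp only [norm_smul]
    calc ‖co (zs n)‖ * ‖u (ind (zs n))‖ ≤ |co (zs n)| * 1 :=
          mul_le_mul_of_nonneg_left (hu _) (abs_nonneg _)
      _ = |co (zs n)| := mul_one _
      _ ≤ 2 * ‖z‖ * (1/2)^n := by
          calc |co (zs n)| ≤ 2 * ‖zs n‖ := hco (zs n)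
            _ ≤ 2 * (‖z‖ / 2 ^ n) := by have := hzsnorm n; linarith
            _ = 2 * ‖z‖ * (1/2)^n := by rw [div_eq_mul_inv, one_div, inv_pow]; ring
  have hpartial : ∀ n, ∑ k ∈ Finset.range n, G k = z - zs n := by
    intro n
    induction n with
    | zero => simp [hzs0]
    | succ n ih =>
      rw [Finset.sum_range_succ, ih, hzssucc n]
      rw [hGdef]
      abel
  have htendsto : Filter.Tendsto (fun n => ∑ k ∈ Finset.range n, G k) Filter.atTop (nhds z) := by
    simp_rw [hpartial]
    have hzs_to0 : Filter.Tendsto zs Filter.atTop (nhds 0) := by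
      rw [tendsto_zero_iff_norm_tendsto_zero]
      refine squeeze_zero (fun n => norm_nonneg _) hzsnorm ?_
      simpa [div_eq_mul_inv, one_div, inv_pow] using
        (tendsto_pow_atTop_nhds_zero_of_lt_one (by norm_num : (0:ℝ) ≤ 1/2)
          (by norm_num : (1:ℝ)/2 < 1)).const_mul ‖z‖
    simpa using (tendsto_const_nhds (x := z)).sub hzs_to0
  exact tendsto_nhds_unique (hGsum.hasSum.tendsto_sum_nat) htendsto

end Stmt0Aux

/-- The density character of a topological space: the least cardinality of a dense subset. -/
noncomputable def dens (X : Type) [TopologicalSpace X] : Cardinal :=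
  sInf {c | ∃ s : Set X, Dense s ∧ #s = c}

set_option maxHeartbeats 2000000 in
open Stmt0Aux in
theorem stmt0
    (E : Type) [NormedAddCommGroup E] [NormedSpace ℝ E] [CompleteSpace E]
    (ℵ : Cardinal) (hℵ : Cardinal.aleph0 < ℵ)
    (hext : ∀ (I : Type), #I < ℵ →
      ∀ (Y : Submodule ℝ (lp (fun _ : I => ℝ) 1)),
        IsClosed (Y : Set (lp (fun _ : I => ℝ) 1)) →
        ∀ t : Y →L[ℝ] E, ∃ T : (lp (fun _ : I => ℝ) 1) →L[ℝ] E, ∀ y : Y, T y = t y) :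
    ∀ (X : Type) [NormedAddCommGroup X] [NormedSpace ℝ X] [CompleteSpace X]
      (E' : Submodule ℝ X), IsClosed (E' : Set X) → Nonempty (E' ≃ₗᵢ[ℝ] E) →
      dens (X ⧸ E') < ℵ → Submodule.ClosedComplemented E' := by
  intro X _ _ _ E' hE'closed hiso hdens
  classical
  obtain ⟨e⟩ := hiso
  haveI : IsClosed (E' : Set X) := hE'closed
  -- a dense set realizing the density character
  have hmem : dens (X ⧸ E') ∈ {c | ∃ s : Set (X ⧸ E'), Dense s ∧ #s = c} := by
    apply csInf_mem
    exact ⟨#(Set.univ : Set (X ⧸ E')), Set.univ, dense_univ, rfl⟩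
  obtain ⟨s, hsd, hscard⟩ := hmem
  have hIcard : #(↥s) < ℵ := by rw [hscard]; exact hdens
  haveI : Nonempty (↥s) := (hsd.nonempty).to_subtype
  -- the generating family in the unit ball of the quotient
  set u : ↥s → (X ⧸ E') := fun v => if ‖(v : X ⧸ E')‖ ≤ 1 then (v : X ⧸ E') else 0 with hu_def
  have hu : ∀ i, ‖u i‖ ≤ 1 := by
    intro i
    simp only [hu_def]
    split_ifs with h
    · exact h
    · simp
  have hudense : ∀ z : X ⧸ E', ‖z‖ < 1 → ∀ ε > 0, ∃ i, ‖z - u i‖ < ε := by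
    intro z hz ε hε
    set ε' : ℝ := min ε ((1 - ‖z‖) / 2) with hε'_def
    have hε' : 0 < ε' := lt_min hε (by linarith)
    obtain ⟨v, hvball, hvs⟩ := (Metric.dense_iff.mp hsd z ε' hε')
    have hdist : ‖z - v‖ < ε' := by
      rw [← dist_eq_norm]
      exact Metric.mem_ball'.mp hvball
    have hvnorm : ‖v‖ ≤ 1 := by
      have : ‖v‖ ≤ ‖z‖ + ‖z - v‖ := by
        calc ‖v‖ = ‖z - (z - v)‖ := by rw [sub_sub_cancel]
          _ ≤ ‖z‖ + ‖z - v‖ := norm_sub_le _ _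
      have h2 : ε' ≤ (1 - ‖z‖) / 2 := min_le_right _ _
      linarith
    refine ⟨⟨v, hvs⟩, ?_⟩
    have : u ⟨v, hvs⟩ = v := by simp only [hu_def]; exact if_pos hvnorm
    rw [this]
    exact hdist.trans_le (min_le_left _ _)
  -- the quotient operator q : ℓ₁(s) → X ⧸ E'
  set q : lp (fun _ : ↥s => ℝ) 1 →L[ℝ] (X ⧸ E') := phiL u 1 hu with hq_def
  have hqsurj : Function.Surjective q := phiL_surjective u hu hudense
  -- the lift Qhat : ℓ₁(s) → X
  have hxs_ex : ∀ i, ∃ m : X, (Submodule.Quotient.mk m : X ⧸ E') = u i ∧ ‖m‖ < ‖u i‖ + 1 :=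
    fun i => Submodule.Quotient.norm_mk_lt (u i) one_pos
  choose xs hxs1 hxs2 using hxs_ex
  have hxs : ∀ i, ‖xs i‖ ≤ 2 := fun i => le_of_lt ((hxs2 i).trans_le (by linarith [hu i]))
  set Qhat : lp (fun _ : ↥s => ℝ) 1 →L[ℝ] X := phiL xs 2 hxs with hQhat_def
  -- the continuous projection πL : X → X ⧸ E'
  set πL : X →L[ℝ] (X ⧸ E') :=
    LinearMap.mkContinuous E'.mkQ 1
      (fun x => by simpa using Submodule.Quotient.norm_mk_le E' x) with hπL_def
  have hπL_apply : ∀ x : X, πL x = Submodule.Quotient.mk x := fun x => rfl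
  have hπQhat : ∀ f, πL (Qhat f) = q f := by
    intro f
    rw [hQhat_def, comp_phiL xs 2 hxs πL f, hq_def, phiL_apply]
    congr 1
    ext i
    rw [hπL_apply, hxs1]
  -- the kernel Y
  set Y : Submodule ℝ (lp (fun _ : ↥s => ℝ) 1) := LinearMap.ker (q : lp (fun _ : ↥s => ℝ) 1 →ₗ[ℝ] (X ⧸ E')) with hY_def
  have hYclosed : IsClosed (Y : Set (lp (fun _ : ↥s => ℝ) 1)) :=
    ContinuousLinearMap.isClosed_ker q
  -- restriction of Qhat to Y lands in E'
  have hmemE' : ∀ y : Y, Qhat (y : lp (fun _ : ↥s => ℝ) 1) ∈ E' := by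
    intro y
    rw [← Submodule.Quotient.mk_eq_zero, ← hπL_apply, hπQhat]
    exact y.2
  set t0 : Y →L[ℝ] E' := (Qhat.comp Y.subtypeL).codRestrict E' (fun y => hmemE' y) with ht0_def
  set eCL : E' ≃L[ℝ] E := e.toContinuousLinearEquiv with heCL_def
  set t : Y →L[ℝ] E := (eCL : E' →L[ℝ] E).comp t0 with ht_def
  obtain ⟨T, hT⟩ := hext (↥s) hIcard Y hYclosed t
  set r : E →L[ℝ] X := E'.subtypeL.comp (eCL.symm : E →L[ℝ] E') with hr_def
  set S : lp (fun _ : ↥s => ℝ) 1 →L[ℝ] X := Qhat - r.comp T with hS_def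
  have hSvanish : ∀ y : Y, S (y : lp (fun _ : ↥s => ℝ) 1) = 0 := by
    intro y
    rw [hS_def]
    simp only [ContinuousLinearMap.coe_sub', Pi.sub_apply, ContinuousLinearMap.coe_comp',
      Function.comp_apply]
    rw [hT y, ht_def]
    simp only [ContinuousLinearMap.coe_comp', Function.comp_apply, ContinuousLinearMap.coe_coe]
    rw [hr_def]
    simp only [ContinuousLinearMap.coe_comp', Function.comp_apply,
      ContinuousLinearEquiv.coe_coe, ContinuousLinearEquiv.symm_apply_apply]
    have : (E'.subtypeL) (t0 y) = Qhat (y : lp (fun _ : ↥s => ℝ) 1) := rfl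
    rw [this, sub_self]
  have hπS : ∀ f, πL (S f) = q f := by
    intro f
    rw [hS_def]
    simp only [ContinuousLinearMap.coe_sub', Pi.sub_apply, ContinuousLinearMap.coe_comp',
      Function.comp_apply]
    rw [map_sub, hπQhat]
    have : πL (r (T f)) = 0 := by
      rw [hπL_apply, Submodule.Quotient.mk_eq_zero]
      exact ((eCL.symm : E →L[ℝ] E') (T f)).2
    rw [this, sub_zero]
  -- lifted maps on the quotient ℓ₁ ⧸ Y
  have hYker : Y ≤ LinearMap.ker (S : lp (fun _ : ↥s => ℝ) 1 →ₗ[ℝ] X) := by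
    intro y hy
    exact hSvanish ⟨y, hy⟩
  set Slift₀ : (lp (fun _ : ↥s => ℝ) 1 ⧸ Y) →ₗ[ℝ] X :=
    Y.liftQ (S : lp (fun _ : ↥s => ℝ) 1 →ₗ[ℝ] X) hYker with hSlift₀_def
  have hSlift₀cont : Continuous Slift₀ :=
    (Submodule.isOpenQuotientMap_mkQ Y).continuous_comp_iff.mp S.continuous
  set Slift : (lp (fun _ : ↥s => ℝ) 1 ⧸ Y) →L[ℝ] X := ⟨Slift₀, hSlift₀cont⟩ with hSlift_def
  set qbar₀ : (lp (fun _ : ↥s => ℝ) 1 ⧸ Y) →ₗ[ℝ] (X ⧸ E') :=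
    Y.liftQ (q : lp (fun _ : ↥s => ℝ) 1 →ₗ[ℝ] (X ⧸ E')) (le_refl _) with hqbar₀_def
  have hqbar₀cont : Continuous qbar₀ :=
    (Submodule.isOpenQuotientMap_mkQ Y).continuous_comp_iff.mp q.continuous
  set qbar : (lp (fun _ : ↥s => ℝ) 1 ⧸ Y) →L[ℝ] (X ⧸ E') := ⟨qbar₀, hqbar₀cont⟩ with hqbar_def
  haveI : IsClosed (Y : Set (lp (fun _ : ↥s => ℝ) 1)) := hYclosed
  have hqbar_mk : ∀ f, qbar (Y.mkQ f) = q f := fun f => rfl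
  have hker : LinearMap.ker (qbar : (lp (fun _ : ↥s => ℝ) 1 ⧸ Y) →ₗ[ℝ] (X ⧸ E')) = ⊥ := by
    rw [LinearMap.ker_eq_bot]
    intro a b hab
    obtain ⟨fa, rfl⟩ := Submodule.Quotient.mk_surjective Y a
    obtain ⟨fb, rfl⟩ := Submodule.Quotient.mk_surjective Y b
    have hab' : q fa = q fb := hab
    rw [Submodule.Quotient.eq]
    exact LinearMap.mem_ker.mpr (by rw [map_sub, ContinuousLinearMap.coe_coe, hab', sub_self])
  have hrange : LinearMap.range (qbar : (lp (fun _ : ↥s => ℝ) 1 ⧸ Y) →ₗ[ℝ] (X ⧸ E')) = ⊤ := by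
    rw [LinearMap.range_eq_top]
    intro z
    obtain ⟨f, hf⟩ := hqsurj z
    exact ⟨Y.mkQ f, hf⟩
  set qe : (lp (fun _ : ↥s => ℝ) 1 ⧸ Y) ≃L[ℝ] (X ⧸ E') :=
    ContinuousLinearEquiv.ofBijective qbar hker hrange with hqe_def
  set Sbar : (X ⧸ E') →L[ℝ] X := Slift.comp (qe.symm : (X ⧸ E') →L[ℝ] _) with hSbar_def
  have hlift : ∀ z : X ⧸ E', πL (Sbar z) = z := by
    intro z
    obtain ⟨f, hf⟩ := hqsurj z
    have hqbar_mk : qe (Y.mkQ f) = z := by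
      rw [← hf]
      rfl
    have hsymm : (qe.symm : (X ⧸ E') →L[ℝ] _) z = Y.mkQ f := by
      rw [← hqbar_mk]
      simp
    rw [hSbar_def]
    simp only [ContinuousLinearMap.coe_comp', Function.comp_apply]
    rw [hsymm]
    have : Slift (Y.mkQ f) = S f := rfl
    rw [this, hπS, hf]
  -- the projection
  set P0 : X →L[ℝ] X := ContinuousLinearMap.id ℝ X - Sbar.comp πL with hP0_def
  have hP0mem : ∀ x : X, P0 x ∈ E' := by
    intro x
    rw [← Submodule.Quotient.mk_eq_zero, ← hπL_apply]
    rw [hP0_def]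
    simp only [ContinuousLinearMap.coe_sub', Pi.sub_apply, ContinuousLinearMap.coe_id', id_eq,
      ContinuousLinearMap.coe_comp', Function.comp_apply]
    rw [map_sub, hlift, sub_self]
  refine ⟨P0.codRestrict E' hP0mem, ?_⟩
  intro x
  apply Subtype.ext
  have h1 : ((P0.codRestrict E' hP0mem) (x : X) : X) = P0 (x : X) := rfl
  rw [h1, hP0_def]
  simp only [ContinuousLinearMap.coe_sub', Pi.sub_apply, ContinuousLinearMap.coe_id', id_eq,
    ContinuousLinearMap.coe_comp', Function.comp_apply]
  have hx0 : πL (x : X) = 0 := by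
    rw [hπL_apply, Submodule.Quotient.mk_eq_zero]
    exact x.2
  rw [hx0, map_zero, sub_zero]
end

section
/- Let E be a Banach space and ℵ an uncountable cardinal. If E is complemented in every Banach space X containing it with dens(X/E) < ℵ, then for every Banach space X, every closed subspace Y ⊆ X with dens(X/Y) < ℵ, and every bounded operator t : Y → E, there exists a bounded operator T : X → E extending t. -/
open Cardinal

lemma dens_le_of_surj {A B : Type} [TopologicalSpace A] [TopologicalSpace B]
    {f : A → B} (hf : Continuous f) (hsurj : Function.Surjective f) :
    dens B ≤ dens A := by
  have hne : {c | ∃ s : Set A, Dense s ∧ #s = c}.Nonempty :=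
    ⟨#(Set.univ : Set A), Set.univ, dense_univ, rfl⟩
  obtain ⟨s, hs, hcard⟩ := csInf_mem hne
  have hdense : Dense (f '' s) := by
    have h1 : f '' closure s ⊆ closure (f '' s) := image_closure_subset_closure_image hf
    rw [hs.closure_eq, Set.image_univ, hsurj.range_eq] at h1
    exact dense_iff_closure_eq.mpr (Set.eq_univ_of_univ_subset h1)
  calc dens B ≤ #(f '' s) := csInf_le' ⟨f '' s, hdense, rfl⟩
    _ ≤ #s := Cardinal.mk_image_le
    _ = dens A := hcard

set_option maxHeartbeats 2000000 in
theorem stmt1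
    (E : Type) [NormedAddCommGroup E] [NormedSpace ℝ E] [CompleteSpace E]
    (ℵ : Cardinal) (hℵ : Cardinal.aleph0 < ℵ)
    (hcompl : ∀ (X : Type) [NormedAddCommGroup X] [NormedSpace ℝ X] [CompleteSpace X]
      (E' : Submodule ℝ X), IsClosed (E' : Set X) → Nonempty (E' ≃ₗᵢ[ℝ] E) →
      dens (X ⧸ E') < ℵ → Submodule.ClosedComplemented E') :
    ∀ (X : Type) [NormedAddCommGroup X] [NormedSpace ℝ X] [CompleteSpace X]
      (Y : Submodule ℝ X), IsClosed (Y : Set X) → dens (X ⧸ Y) < ℵ →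
      ∀ t : Y →L[ℝ] E, ∃ T : X →L[ℝ] E, ∀ y : Y, T y = t y := by
  intro X _ _ _ Y hYcl hdens t
  haveI : CompleteSpace Y := hYcl.completeSpace_coe
  set c : ℝ := ‖t‖ + 1 with hcdef
  have hc0 : (0:ℝ) < c := by positivity
  set t' : Y →L[ℝ] E := c⁻¹ • t with ht'def
  have ht'le : ∀ y : Y, ‖t' y‖ ≤ ‖y‖ := by
    intro y
    have h1 := t.le_opNorm y
    have h2 : ‖t' y‖ = c⁻¹ * ‖t y‖ := by
      rw [ht'def, ContinuousLinearMap.smul_apply, norm_smul, Real.norm_eq_abs,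
        abs_of_pos (inv_pos.mpr hc0)]
    rw [h2, inv_mul_le_iff₀ hc0]
    nlinarith [norm_nonneg y]
  -- the ℓ¹-sum ambient space
  set P := WithLp 1 (X × E) with hPdef
  have normP : ∀ z : P, ‖z‖ = ‖z.fst‖ + ‖z.snd‖ := fun z => by
    simpa using WithLp.prod_norm_eq_add (by norm_num) z
  -- the graph of -t' as a linear map Y → P
  set gl : Y →ₗ[ℝ] P :=
    (WithLp.linearEquiv 1 ℝ (X × E)).symm.toLinearMap.comp
      (Y.subtype.prod (-t'.toLinearMap)) with hgldef
  have gl_fst : ∀ y : Y, (gl y).fst = (y : X) := fun y => rfl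
  have gl_snd : ∀ y : Y, (gl y).snd = -(t' y) := fun y => rfl
  have gl_norm : ∀ y : Y, ‖gl y‖ = ‖y‖ + ‖t' y‖ := by
    intro y; rw [normP, gl_fst, gl_snd, norm_neg]; rfl
  set g : Y →L[ℝ] P := gl.mkContinuous 2 (fun y => by
    rw [gl_norm]; have := ht'le y; linarith) with hgdef
  have hg_eq : ∀ y : Y, g y = gl y := fun y => rfl
  have hanti : AntilipschitzWith 1 g := g.antilipschitz_of_bound (fun y => by
    rw [NNReal.coe_one, one_mul, hg_eq, gl_norm]
    have := norm_nonneg (t' y); linarith)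
  set G : Submodule ℝ P := LinearMap.range (g : Y →ₗ[ℝ] P) with hGdef
  have hGcl : IsClosed (G : Set P) := by
    have h := hanti.isClosed_range g.uniformContinuous
    have : (G : Set P) = Set.range g := by
      ext z; simp [hGdef, LinearMap.mem_range, Set.mem_range]
    rwa [this]
  haveI hGcl' : IsClosed (G : Set P) := hGcl
  -- the embedding of E
  set inrl : E →ₗ[ℝ] P :=
    (WithLp.linearEquiv 1 ℝ (X × E)).symm.toLinearMap.comp (LinearMap.inr ℝ X E) with hinrldef
  have inrl_fst : ∀ e : E, (inrl e).fst = 0 := fun _ => rfl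
  have inrl_snd : ∀ e : E, (inrl e).snd = e := fun _ => rfl
  have key_lower : ∀ (e : E) (m : P),
      (Submodule.Quotient.mk m : P ⧸ G) = Submodule.Quotient.mk (inrl e) → ‖e‖ ≤ ‖m‖ := by
    intro e m hm
    rw [Submodule.Quotient.eq] at hm
    obtain ⟨y, hy⟩ := hm
    have hfst : (y : X) = m.fst := by
      have h : (g y).fst = (m - inrl e).fst := congrArg WithLp.fst hy
      rw [show (g y).fst = (y : X) from rfl,
        show (m - inrl e).fst = m.fst - (inrl e).fst from rfl, inrl_fst, sub_zero] at h
      exact h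
    have hsnd : -(t' y) = m.snd - e := by
      have h : (g y).snd = (m - inrl e).snd := congrArg WithLp.snd hy
      rw [show (g y).snd = -(t' y) from rfl,
        show (m - inrl e).snd = m.snd - (inrl e).snd from rfl, inrl_snd] at h
      exact h
    have h1 : ‖m‖ = ‖(y : X)‖ + ‖m.snd‖ := by rw [normP m, ← hfst]
    have hyy : ‖(y : X)‖ = ‖y‖ := rfl
    have h2 : ‖e‖ - ‖t' y‖ ≤ ‖m.snd‖ := by
      have hm2 : m.snd = e - t' y := by
        rw [sub_eq_iff_eq_add.mp hsnd.symm]; abel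
      rw [hm2]
      exact (norm_sub_norm_le e (t' y)).trans_eq' (by ring)
    have := ht'le y
    rw [hyy] at h1
    linarith
  set J : E →ₗᵢ[ℝ] (P ⧸ G) := ⟨G.mkQ.comp inrl, by
    intro e
    refine le_antisymm ?_ ?_
    · refine (Submodule.Quotient.norm_mk_le G (inrl e)).trans ?_
      rw [normP, inrl_fst, inrl_snd, norm_zero, zero_add]
    · by_contra h
      push_neg at h
      obtain ⟨m, hm, hlt⟩ := Submodule.Quotient.norm_mk_lt
        ((G.mkQ.comp inrl) e) (sub_pos.mpr h)
      have hle := key_lower e m hm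
      have : ‖m‖ < ‖e‖ := by
        calc ‖m‖ < ‖(G.mkQ.comp inrl) e‖ + (‖e‖ - ‖(G.mkQ.comp inrl) e‖) := hlt
          _ = ‖e‖ := by ring
      linarith⟩ with hJdef
  have hJ_eq : ∀ e : E, (J e : P ⧸ G) = Submodule.Quotient.mk (inrl e) := fun e => rfl
  set E' : Submodule ℝ (P ⧸ G) := LinearMap.range J.toLinearMap with hE'def
  have hE'cl : IsClosed (E' : Set (P ⧸ G)) := by
    have h := J.isometry.isClosedEmbedding.isClosed_range
    have : (E' : Set (P ⧸ G)) = Set.range J := by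
      ext z
      simp only [SetLike.mem_coe, hE'def, LinearMap.mem_range, Set.mem_range,
        LinearIsometry.coe_toLinearMap]
    rwa [this]
  have hequiv : Nonempty (E' ≃ₗᵢ[ℝ] E) := ⟨J.equivRange.symm⟩
  -- density estimate
  set inll : X →ₗ[ℝ] P :=
    (WithLp.linearEquiv 1 ℝ (X × E)).symm.toLinearMap.comp (LinearMap.inl ℝ X E) with hinlldef
  have inll_fst : ∀ x : X, (inll x).fst = x := fun _ => rfl
  have inll_snd : ∀ x : X, (inll x).snd = 0 := fun _ => rfl
  set ψ : X →ₗ[ℝ] ((P ⧸ G) ⧸ E') := E'.mkQ.comp (G.mkQ.comp inll) with hψdef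
  have hψle : ∀ x : X, ‖ψ x‖ ≤ ‖x‖ := by
    intro x
    calc ‖ψ x‖ ≤ ‖(Submodule.Quotient.mk (inll x) : P ⧸ G)‖ :=
          Submodule.Quotient.norm_mk_le _ _
      _ ≤ ‖inll x‖ := Submodule.Quotient.norm_mk_le _ _
      _ = ‖x‖ := by rw [normP, inll_fst, inll_snd, norm_zero, add_zero]
  have hmkJ : ∀ y : Y, (Submodule.Quotient.mk (inll (y : X)) : P ⧸ G) = J (t' y) := by
    intro y
    rw [hJ_eq, Submodule.Quotient.eq]
    refine ⟨y, ?_⟩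
    have e1 : (g y).fst = (inll (y : X) - inrl (t' y)).fst := by
      rw [show (g y).fst = (y : X) from rfl,
        show (inll (y : X) - inrl (t' y)).fst = (inll (y : X)).fst - (inrl (t' y)).fst from rfl,
        inll_fst, inrl_fst, sub_zero]
    have e2 : (g y).snd = (inll (y : X) - inrl (t' y)).snd := by
      rw [show (g y).snd = -(t' y) from rfl,
        show (inll (y : X) - inrl (t' y)).snd = (inll (y : X)).snd - (inrl (t' y)).snd from rfl,
        inll_snd, inrl_snd, zero_sub]
    exact (WithLp.ext_iff _).mpr (Prod.ext e1 e2)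
  have hψY : Y ≤ LinearMap.ker ψ := by
    intro x hx
    rw [LinearMap.mem_ker]
    show E'.mkQ (Submodule.Quotient.mk (inll x)) = 0
    rw [show inll x = inll ((⟨x, hx⟩ : Y) : X) from rfl, hmkJ ⟨x, hx⟩,
      Submodule.mkQ_apply, Submodule.Quotient.mk_eq_zero]
    exact ⟨t' ⟨x, hx⟩, rfl⟩
  set φ : (X ⧸ Y) →ₗ[ℝ] ((P ⧸ G) ⧸ E') := Y.liftQ ψ hψY with hφdef
  have hφmk : ∀ x : X, φ (Submodule.Quotient.mk x) = ψ x := fun x => rfl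
  have hφbound : ∀ q, ‖φ q‖ ≤ 1 * ‖q‖ := by
    intro q
    rw [one_mul]
    refine le_of_forall_pos_le_add fun ε hε => ?_
    obtain ⟨m, hm, hlt⟩ := Submodule.Quotient.norm_mk_lt q hε
    calc ‖φ q‖ = ‖ψ m‖ := by rw [← hm, hφmk]
      _ ≤ ‖m‖ := hψle m
      _ ≤ ‖q‖ + ε := hlt.le
  have hφcont : Continuous φ := AddMonoidHomClass.continuous_of_bound φ 1 hφbound
  have hφsurj : Function.Surjective φ := by
    intro w
    obtain ⟨z, rfl⟩ := Submodule.Quotient.mk_surjective E' w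
    obtain ⟨p, rfl⟩ := Submodule.Quotient.mk_surjective G z
    refine ⟨Submodule.Quotient.mk p.fst, ?_⟩
    rw [hφmk]
    show E'.mkQ (Submodule.Quotient.mk (inll p.fst)) = E'.mkQ (Submodule.Quotient.mk p)
    have hp : p - inll p.fst = inrl p.snd := by
      refine (WithLp.ext_iff _).mpr (Prod.ext ?_ ?_)
      · show p.fst - (inll p.fst).fst = (inrl p.snd).fst
        rw [inll_fst, inrl_fst, sub_self]
      · show p.snd - (inll p.fst).snd = (inrl p.snd).snd
        rw [inll_snd, inrl_snd, sub_zero]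
    have : (Submodule.Quotient.mk p : P ⧸ G) - Submodule.Quotient.mk (inll p.fst) ∈ E' := by
      rw [← Submodule.Quotient.mk_sub, hp, ← hJ_eq]
      exact ⟨p.snd, rfl⟩
    rw [Submodule.mkQ_apply, Submodule.mkQ_apply, eq_comm, Submodule.Quotient.eq]
    exact this
  have hdens' : dens ((P ⧸ G) ⧸ E') < ℵ :=
    lt_of_le_of_lt (dens_le_of_surj hφcont hφsurj) hdens
  obtain ⟨f, hf⟩ := hcompl (P ⧸ G) E' hE'cl hequiv hdens'
  set Tl : X →ₗ[ℝ] E := c • (J.equivRange.symm.toLinearEquiv.toLinearMap.comp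
      (f.toLinearMap.comp (G.mkQ.comp inll))) with hTldef
  have hTl_apply : ∀ x : X,
      Tl x = c • J.equivRange.symm (f (Submodule.Quotient.mk (inll x))) := fun x => rfl
  have hTlbound : ∀ x : X, ‖Tl x‖ ≤ (c * ‖f‖) * ‖x‖ := by
    intro x
    rw [hTl_apply x, norm_smul, Real.norm_eq_abs, abs_of_pos hc0,
      LinearIsometryEquiv.norm_map]
    have h1 : ‖f (Submodule.Quotient.mk (inll x))‖ ≤ ‖f‖ * ‖x‖ := by
      refine (f.le_opNorm _).trans ?_
      have h2 : ‖(Submodule.Quotient.mk (inll x) : P ⧸ G)‖ ≤ ‖x‖ := by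
        refine (Submodule.Quotient.norm_mk_le _ _).trans ?_
        rw [normP, inll_fst, inll_snd, norm_zero, add_zero]
      exact mul_le_mul_of_nonneg_left h2 (norm_nonneg f)
    rw [mul_assoc]
    exact mul_le_mul_of_nonneg_left h1 hc0.le
  refine ⟨Tl.mkContinuous (c * ‖f‖) hTlbound, ?_⟩
  intro y
  show Tl (y : X) = t y
  rw [hTl_apply, hmkJ y]
  have hmem : J (t' y) ∈ E' := ⟨t' y, rfl⟩
  have h2 : f (J (t' y)) = ⟨J (t' y), hmem⟩ := hf ⟨J (t' y), hmem⟩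
  rw [h2]
  have h3 : (⟨J (t' y), hmem⟩ : E') = J.equivRange (t' y) := Subtype.ext rfl
  rw [h3, LinearIsometryEquiv.symm_apply_apply, ht'def]
  show c • (c⁻¹ • t y) = t y
  rw [smul_smul, mul_inv_cancel₀ hc0.ne', one_smul]
end

section
/- The class of ℵ-injective Banach spaces is a 3-space property: if 0 → F → E → G → 0 is a short exact sequence of Banach spaces (F a closed subspace of E with quotient G) and both F and G are ℵ-injective, then E is ℵ-injective. -/
open Cardinal

/-- A Banach space `E` is `ℵ`-injective if for every Banach space `X` of density character
less than `ℵ` and every closed subspace `Y ⊆ X`, every bounded operator `t : Y → E`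
extends to a bounded operator `T : X → E`. -/
def AlephInjective (E : Type) [NormedAddCommGroup E] [NormedSpace ℝ E] [CompleteSpace E]
    (ℵ : Cardinal) : Prop :=
  ∀ (X : Type) [NormedAddCommGroup X] [NormedSpace ℝ X] [CompleteSpace X],
    dens X < ℵ → ∀ (Y : Submodule ℝ X), IsClosed (Y : Set X) →
    ∀ t : Y →L[ℝ] E, ∃ T : X →L[ℝ] E, ∀ y : Y, T y = t y


section SumCLM

variable {Γ : Type} {X : Type} [NormedAddCommGroup X] [NormedSpace ℝ X]

theorem summable_norm_lp1 (f : lp (fun _ : Γ => ℝ) 1) : Summable fun γ => ‖f γ‖ := by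
  have := (lp.memℓp f).summable (by norm_num : 0 < (1 : ENNReal).toReal)
  simpa using this

theorem norm_lp1 (f : lp (fun _ : Γ => ℝ) 1) : ‖f‖ = ∑' γ, ‖f γ‖ := by
  rw [lp.norm_eq_tsum_rpow (by norm_num : 0 < (1 : ENNReal).toReal)]
  simp

theorem summable_smul_lp1 [CompleteSpace X] (f : lp (fun _ : Γ => ℝ) 1) {e : Γ → X} {M : ℝ}
    (hM : ∀ γ, ‖e γ‖ ≤ M) : Summable fun γ => f γ • e γ := by
  refine Summable.of_norm_bounded ((summable_norm_lp1 f).mul_right M) ?_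
  intro γ
  rw [norm_smul]
  exact mul_le_mul_of_nonneg_left (hM γ) (norm_nonneg _)

/-- The operator `ℓ¹(Γ) → X` determined by a bounded family `e : Γ → X`. -/
noncomputable def sumCLM [CompleteSpace X] (e : Γ → X) (M : ℝ) (hM0 : 0 ≤ M)
    (hM : ∀ γ, ‖e γ‖ ≤ M) : lp (fun _ : Γ => ℝ) 1 →L[ℝ] X :=
  LinearMap.mkContinuous
    { toFun := fun f => ∑' γ, f γ • e γ
      map_add' := by
        intro f g
        rw [← Summable.tsum_add (summable_smul_lp1 f hM) (summable_smul_lp1 g hM)]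
        refine tsum_congr fun γ => ?_
        rw [lp.coeFn_add]
        simp [add_smul]
      map_smul' := by
        intro c f
        dsimp only [RingHom.id_apply]
        rw [← ((summable_smul_lp1 f hM).hasSum.const_smul c).tsum_eq]
        refine tsum_congr fun γ => ?_
        rw [lp.coeFn_smul]
        simp [mul_smul] }
    M
    (by
      intro f
      have h1 : ‖∑' γ, f γ • e γ‖ ≤ ∑' γ, ‖f γ • e γ‖ := by
        refine norm_tsum_le_tsum_norm ?_
        refine Summable.of_nonneg_of_le (fun γ => norm_nonneg _) (fun γ => ?_)
          ((summable_norm_lp1 f).mul_right M)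
        rw [norm_smul]
        exact mul_le_mul_of_nonneg_left (hM γ) (norm_nonneg _)
      have h2 : ∑' γ, ‖f γ • e γ‖ ≤ ∑' γ, ‖f γ‖ * M := by
        refine Summable.tsum_le_tsum (fun γ => ?_) ?_ ((summable_norm_lp1 f).mul_right M)
        · rw [norm_smul]
          exact mul_le_mul_of_nonneg_left (hM γ) (norm_nonneg _)
        · refine Summable.of_nonneg_of_le (fun γ => norm_nonneg _) (fun γ => ?_)
            ((summable_norm_lp1 f).mul_right M)
          rw [norm_smul]
          exact mul_le_mul_of_nonneg_left (hM γ) (norm_nonneg _)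
      calc ‖∑' γ, f γ • e γ‖ ≤ ∑' γ, ‖f γ‖ * M := h1.trans h2
        _ = M * ‖f‖ := by rw [tsum_mul_right, norm_lp1 f, mul_comm])

theorem sumCLM_apply [CompleteSpace X] (e : Γ → X) (M : ℝ) (hM0 : 0 ≤ M)
    (hM : ∀ γ, ‖e γ‖ ≤ M) (f : lp (fun _ : Γ => ℝ) 1) :
    sumCLM e M hM0 hM f = ∑' γ, f γ • e γ := rfl

theorem sumCLM_single [CompleteSpace X] [DecidableEq Γ] (e : Γ → X) (M : ℝ) (hM0 : 0 ≤ M)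
    (hM : ∀ γ, ‖e γ‖ ≤ M) (γ : Γ) (c : ℝ) :
    sumCLM e M hM0 hM (lp.single 1 γ c) = c • e γ := by
  rw [sumCLM_apply]
  rw [tsum_eq_single γ (fun b hb => by simp [lp.single_apply, hb])]
  simp [lp.single_apply_self]

end SumCLM

section QuotLift

variable {W X : Type} [NormedAddCommGroup W] [NormedSpace ℝ W]
  [NormedAddCommGroup X] [NormedSpace ℝ X]

/-- Factor a continuous linear map through a quotient by a submodule of its kernel. -/
noncomputable def quotLift (K : Submodule ℝ W) (u : W →L[ℝ] X)
    (h : K ≤ LinearMap.ker (u : W →ₗ[ℝ] X)) : (W ⧸ K) →L[ℝ] X :=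
  LinearMap.mkContinuous (K.liftQ (u : W →ₗ[ℝ] X) h) ‖u‖ (by
    intro v
    refine le_of_forall_pos_le_add fun ε hε => ?_
    have hδ : 0 < ε / (‖u‖ + 1) := by positivity
    obtain ⟨m, rfl, hm⟩ := Submodule.Quotient.norm_mk_lt v hδ
    rw [Submodule.liftQ_apply]
    simp only [ContinuousLinearMap.coe_coe]
    have h1 : ‖u m‖ ≤ ‖u‖ * ‖m‖ := u.le_opNorm m
    have h2 : ‖u‖ * (ε / (‖u‖ + 1)) ≤ ε := by
      rw [div_eq_inv_mul, ← mul_assoc]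
      have : ‖u‖ * (‖u‖ + 1)⁻¹ ≤ 1 := by
        rw [mul_inv_le_iff₀ (by positivity), one_mul]
        linarith [norm_nonneg u]
      nlinarith [hε.le]
    have h3 : ‖u‖ * ‖m‖ ≤ ‖u‖ * (‖(Submodule.Quotient.mk m : W ⧸ K)‖ + ε / (‖u‖ + 1)) :=
      mul_le_mul_of_nonneg_left hm.le (norm_nonneg u)
    rw [mul_add] at h3
    linarith)

theorem quotLift_mk (K : Submodule ℝ W) (u : W →L[ℝ] X) (h : K ≤ LinearMap.ker (u : W →ₗ[ℝ] X)) (w : W) :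
    quotLift K u h (Submodule.Quotient.mk w) = u w := rfl

end QuotLift

section Surj

variable {Γ X : Type} [NormedAddCommGroup X] [NormedSpace ℝ X] [CompleteSpace X]

theorem surjective_of_dense_ball [Nonempty Γ] [DecidableEq Γ] (d : Γ → X)
    (q : lp (fun _ : Γ => ℝ) 1 →L[ℝ] X)
    (hq : ∀ (γ : Γ) (c : ℝ), q (lp.single 1 γ c) = c • d γ)
    (hdense : ∀ (x : X) (r : ℝ), 0 < r → ‖x‖ < r → ∃ γ, ‖x - r • d γ‖ < r / 2) :
    Function.Surjective q := by
  have key : ∀ x : X, ‖x‖ < 1 → ∃ w, q w = x := by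
    intro x hx
    have step : ∀ (n : ℕ) (y : X), ‖y‖ < (2:ℝ)⁻¹ ^ n →
        ∃ γ, ‖y - (2:ℝ)⁻¹ ^ n • d γ‖ < (2:ℝ)⁻¹ ^ (n + 1) := by
      intro n y hy
      obtain ⟨γ, hγ⟩ := hdense y ((2:ℝ)⁻¹ ^ n) (by positivity) hy
      refine ⟨γ, hγ.trans_le (le_of_eq ?_)⟩
      ring
    let G : ∀ (y : X) (n : ℕ), ‖y‖ < (2:ℝ)⁻¹ ^ n → Γ := fun y n h => (step n y h).choose
    have Gspec : ∀ (y : X) (n : ℕ) (h : ‖y‖ < (2:ℝ)⁻¹ ^ n),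
        ‖y - (2:ℝ)⁻¹ ^ n • d (G y n h)‖ < (2:ℝ)⁻¹ ^ (n + 1) := fun y n h => (step n y h).choose_spec
    let u : ∀ n : ℕ, {y : X // ‖y‖ < (2:ℝ)⁻¹ ^ n} := fun n =>
      Nat.rec (motive := fun n => {y : X // ‖y‖ < (2:ℝ)⁻¹ ^ n}) ⟨x, by simpa using hx⟩
        (fun n p => ⟨p.1 - (2:ℝ)⁻¹ ^ n • d (G p.1 n p.2), Gspec p.1 n p.2⟩) n
    let γs : ℕ → Γ := fun n => G (u n).1 n (u n).2
    have hu : ∀ n, (u (n + 1)).1 = (u n).1 - (2:ℝ)⁻¹ ^ n • d (γs n) := fun n => rfl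
    let term : ℕ → lp (fun _ : Γ => ℝ) 1 := fun n => (2:ℝ)⁻¹ ^ n • lp.single 1 (γs n) (1:ℝ)
    have hterm_norm : ∀ n, ‖term n‖ = (2:ℝ)⁻¹ ^ n := by
      intro n
      rw [norm_smul]
      have h1 : ‖lp.single (E := fun _ : Γ => ℝ) 1 (γs n) (1:ℝ)‖ = ‖(1:ℝ)‖ :=
        lp.norm_single (E := fun _ : Γ => ℝ) (p := 1) (by norm_num) (γs n) (1:ℝ)
      rw [h1]
      simp [abs_of_nonneg (by positivity : (0:ℝ) ≤ (2:ℝ)⁻¹ ^ n)]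
    have hsummable : Summable term := by
      refine Summable.of_norm ?_
      simp only [hterm_norm]
      exact summable_geometric_of_lt_one (by norm_num) (by norm_num)
    refine ⟨∑' n, term n, ?_⟩
    have himg : HasSum (fun n => q (term n)) (q (∑' n, term n)) := hsummable.hasSum.mapL q
    have hqterm : ∀ n, q (term n) = (u n).1 - (u (n + 1)).1 := by
      intro n
      rw [hu n, sub_sub_cancel]
      rw [show term n = (2:ℝ)⁻¹ ^ n • lp.single 1 (γs n) (1:ℝ) from rfl, map_smul, hq, one_smul]
    have hpartial : Filter.Tendsto (fun n => ∑ i ∈ Finset.range n, ((u i).1 - (u (i + 1)).1))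
        Filter.atTop (nhds (q (∑' n, term n))) := by
      simpa [hqterm] using himg.tendsto_sum_nat
    have hlim0 : Filter.Tendsto (fun n => (u n).1) Filter.atTop (nhds 0) :=
      squeeze_zero_norm (fun n => ((u n).2).le)
        (tendsto_pow_atTop_nhds_zero_of_lt_one (by norm_num) (by norm_num))
    have hx' : Filter.Tendsto (fun n => x - (u n).1) Filter.atTop (nhds x) := by
      simpa using tendsto_const_nhds.sub hlim0
    refine tendsto_nhds_unique ?_ hx'
    have heq : (fun n => ∑ i ∈ Finset.range n, ((u i).1 - (u (i + 1)).1)) =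
        fun n => x - (u n).1 := by
      funext n
      rw [Finset.sum_range_sub' (fun i => (u i).1) n]
      rfl
    rw [heq] at hpartial
    exact hpartial
  intro x
  rcases eq_or_ne x 0 with rfl | hx
  · exact ⟨0, map_zero q⟩
  · have hxpos : 0 < ‖x‖ := norm_pos_iff.2 hx
    have h2 : ‖(2 * ‖x‖)⁻¹ • x‖ < 1 := by
      rw [norm_smul, norm_inv, Real.norm_eq_abs, abs_of_pos (by positivity)]
      rw [inv_mul_lt_iff₀ (by positivity)]
      linarith
    obtain ⟨w, hw⟩ := key _ h2
    refine ⟨(2 * ‖x‖) • w, ?_⟩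
    rw [map_smul, hw, smul_smul, mul_inv_cancel₀ (by positivity), one_smul]

end Surj

theorem exists_dense_card (X : Type) [TopologicalSpace X] :
    ∃ s : Set X, Dense s ∧ #s = dens X := by
  have hne : {c | ∃ s : Set X, Dense s ∧ #s = c}.Nonempty :=
    ⟨#(Set.univ : Set X), Set.univ, dense_univ, rfl⟩
  exact csInf_mem hne

theorem dens_le_of_dense {X : Type} [TopologicalSpace X] {s : Set X} (hs : Dense s) :
    dens X ≤ #s :=
  csInf_le (OrderBot.bddBelow _) ⟨s, hs, rfl⟩

theorem dens_lp_lt {Γ : Type} [Nonempty Γ] [DecidableEq Γ] {ℵ : Cardinal}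
    (hℵ : Cardinal.aleph0 < ℵ) (hΓ : #Γ < ℵ) :
    dens (lp (fun _ : Γ => ℝ) 1) < ℵ := by
  set DQ : Set (lp (fun _ : Γ => ℝ) 1) :=
    Set.range (fun g : Γ →₀ ℚ => ∑ γ ∈ g.support, ((g γ : ℝ)) • lp.single 1 γ (1:ℝ)) with hDQ
  have hcard : #DQ < ℵ := by
    refine lt_of_le_of_lt Cardinal.mk_range_le ?_
    rw [Cardinal.mk_finsupp_of_infinite' Γ ℚ]
    rw [Cardinal.mkRat]
    exact max_lt hΓ hℵ
  have hdense : Dense DQ := by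
    rw [Metric.dense_iff]
    intro f ε hε
    -- approximate `f` by a finite sum of singles
    have hsum : HasSum (fun γ => lp.single 1 γ (f γ)) f :=
      lp.hasSum_single (by norm_num) f
    have htend := Metric.tendsto_nhds.mp hsum (ε / 2) (by positivity)
    rw [SummationFilter.unconditional_filter, Filter.eventually_atTop] at htend
    obtain ⟨u, hu⟩ := htend
    have hu' : dist (∑ γ ∈ u, lp.single 1 γ (f γ)) f < ε / 2 := hu u le_rfl
    -- approximate coefficients by rationals
    set δ : ℝ := ε / (2 * (u.card + 1)) with hδdef
    have hδ : 0 < δ := by positivity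
    have hrat : ∀ γ : Γ, ∃ r : ℚ, |f γ - (r : ℝ)| < δ := fun γ => exists_rat_near (f γ) hδ
    choose r hr using hrat
    set g : Γ →₀ ℚ := Finsupp.onFinset u (fun γ => if γ ∈ u then r γ else 0)
      (fun γ h => by by_contra hc; simp [hc] at h) with hg
    set b : lp (fun _ : Γ => ℝ) 1 := ∑ γ ∈ g.support, ((g γ : ℝ)) • lp.single 1 γ (1:ℝ) with hb
    refine ⟨b, ?_, ⟨g, rfl⟩⟩
    rw [Metric.mem_ball]
    -- rewrite b as a sum over u
    have hsupp : g.support ⊆ u := Finsupp.support_onFinset_subset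
    have hb' : b = ∑ γ ∈ u, ((g γ : ℝ)) • lp.single 1 γ (1:ℝ) := by
      rw [hb]
      refine Finset.sum_subset hsupp (fun γ hγu hγ => ?_)
      rw [Finsupp.notMem_support_iff.mp hγ]
      simp
    have hgval : ∀ γ ∈ u, (g γ : ℝ) = (r γ : ℝ) := by
      intro γ hγ
      rw [hg, Finsupp.onFinset_apply, if_pos hγ]
    have hdist2 : dist (∑ γ ∈ u, lp.single 1 γ (f γ)) b < ε / 2 := by
      rw [dist_eq_norm, hb']
      have hdiff : (∑ γ ∈ u, lp.single 1 γ (f γ)) - ∑ γ ∈ u, ((g γ : ℝ)) • lp.single 1 γ (1:ℝ)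
          = ∑ γ ∈ u, lp.single 1 γ (f γ - (g γ : ℝ)) := by
        rw [← Finset.sum_sub_distrib]
        refine Finset.sum_congr rfl fun γ _ => ?_
        have h1 : ((g γ : ℝ)) • lp.single (E := fun _ : Γ => ℝ) 1 γ (1:ℝ)
            = lp.single 1 γ ((g γ : ℝ)) := by
          rw [← lp.single_smul]
          norm_num
        rw [h1]
        apply lp.ext
        ext j
        rcases eq_or_ne j γ with rfl | hj
        · simp [lp.single_apply_self]
        · simp [lp.single_apply_ne 1 γ _ hj]
      rw [hdiff]
      calc ‖∑ γ ∈ u, lp.single (E := fun _ : Γ => ℝ) 1 γ (f γ - (g γ : ℝ))‖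
          ≤ ∑ γ ∈ u, ‖lp.single (E := fun _ : Γ => ℝ) 1 γ (f γ - (g γ : ℝ))‖ :=
            norm_sum_le _ _
        _ = ∑ γ ∈ u, ‖f γ - (g γ : ℝ)‖ := by
            refine Finset.sum_congr rfl fun γ _ => ?_
            exact lp.norm_single (E := fun _ : Γ => ℝ) (p := 1) (by norm_num) γ (f γ - (g γ : ℝ))
        _ ≤ ∑ _γ ∈ u, δ := by
            refine Finset.sum_le_sum fun γ hγ => ?_
            rw [hgval γ hγ, Real.norm_eq_abs]
            exact (hr γ).le
        _ = u.card * δ := by rw [Finset.sum_const, nsmul_eq_mul]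
        _ < ε / 2 := by
            have h1 : (u.card : ℝ) * δ < ((u.card : ℝ) + 1) * δ :=
              mul_lt_mul_of_pos_right (by linarith) hδ
            have h2 : ((u.card : ℝ) + 1) * δ = ε / 2 := by
              rw [hδdef]
              field_simp
            linarith
    calc dist b f ≤ dist b (∑ γ ∈ u, lp.single 1 γ (f γ)) + dist (∑ γ ∈ u, lp.single 1 γ (f γ)) f :=
          dist_triangle _ _ _
      _ < ε / 2 + ε / 2 := by
          rw [dist_comm] at hdist2
          exact add_lt_add hdist2 hu'
      _ = ε := by ring
  exact lt_of_le_of_lt (dens_le_of_dense hdense) hcard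


theorem stmt2
    (ℵ : Cardinal) (hℵ : Cardinal.aleph0 < ℵ)
    (F E G : Type)
    [NormedAddCommGroup F] [NormedSpace ℝ F] [CompleteSpace F]
    [NormedAddCommGroup E] [NormedSpace ℝ E] [CompleteSpace E]
    [NormedAddCommGroup G] [NormedSpace ℝ G] [CompleteSpace G]
    (j : F →L[ℝ] E) (π : E →L[ℝ] G)
    (hj : ∃ c : ℝ, 0 < c ∧ ∀ x : F, c * ‖x‖ ≤ ‖j x‖)
    (hπ : Function.Surjective π)
    (hexact : LinearMap.range (j : F →ₗ[ℝ] E) = LinearMap.ker (π : E →ₗ[ℝ] G))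
    (hF : AlephInjective F ℵ) (hG : AlephInjective G ℵ) :
    AlephInjective E ℵ := by
  intro X _instX1 _instX2 _instX3 hdX Y hY t
  classical
  -- Step 1: extend `π ∘ t` to `τ : X → G`.
  obtain ⟨τ, hτ⟩ := hG X hdX Y hY (π.comp t)
  -- a dense set of small cardinality
  obtain ⟨s, hs, hsc⟩ := exists_dense_card X
  have hslt : #s < ℵ := by rw [hsc]; exact hdX
  -- the index set
  set Γ0 : Set X := {v | v ∈ s ∧ ‖v‖ ≤ 1} with hΓ0
  let Γ : Type := ↥Γ0 ⊕ ℕ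
  haveI : Nonempty Γ := ⟨Sum.inr 0⟩
  have hΓ : #Γ < ℵ := by
    have h1 : #↥Γ0 ≤ #↥s := Cardinal.mk_le_mk_of_subset (fun v hv => hv.1)
    have h2 : #Γ = #↥Γ0 + ℵ₀ := by
      simp only [Γ, Cardinal.mk_sum, Cardinal.mk_nat, Cardinal.lift_id]
    rw [h2]
    exact Cardinal.add_lt_of_lt hℵ.le (h1.trans_lt hslt) hℵ
  -- the family of points and the quotient operator `q : ℓ¹(Γ) → X`
  let d : Γ → X := Sum.elim (fun v => (v : X)) (fun _ => 0)
  have hd : ∀ γ, ‖d γ‖ ≤ 1 := by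
    rintro (⟨v, hv⟩ | n)
    · exact hv.2
    · simp [d]
  let W : Type := ↥(lp (fun _ : Γ => ℝ) 1)
  let q : W →L[ℝ] X := sumCLM d 1 zero_le_one hd
  -- `q` is surjective
  have hdense : ∀ (x : X) (r : ℝ), 0 < r → ‖x‖ < r → ∃ γ, ‖x - r • d γ‖ < r / 2 := by
    intro x r hr hx
    have hz : ‖r⁻¹ • x‖ < 1 := by
      rw [norm_smul, norm_inv, Real.norm_eq_abs, abs_of_pos hr, inv_mul_lt_iff₀ hr, mul_one]
      exact hx
    set δ : ℝ := min (1 / 2) (1 - ‖r⁻¹ • x‖) with hδdef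
    have hδ : 0 < δ := lt_min (by norm_num) (by linarith)
    obtain ⟨v, hv1, hv2⟩ := Metric.dense_iff.mp hs (r⁻¹ • x) δ hδ
    rw [Metric.mem_ball, dist_comm, dist_eq_norm] at hv1
    have hvnorm : ‖v‖ ≤ 1 := by
      have h3 : ‖v‖ ≤ ‖r⁻¹ • x‖ + ‖v - r⁻¹ • x‖ := by
        have := norm_add_le (r⁻¹ • x) (v - r⁻¹ • x)
        simpa using this
      have h4 : ‖v - r⁻¹ • x‖ = ‖r⁻¹ • x - v‖ := by rw [norm_sub_rev]
      have h5 : δ ≤ 1 - ‖r⁻¹ • x‖ := min_le_right _ _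
      rw [h4] at h3
      linarith
    refine ⟨Sum.inl ⟨v, hv2, hvnorm⟩, ?_⟩
    have hdv : d (Sum.inl ⟨v, hv2, hvnorm⟩) = v := rfl
    rw [hdv]
    have hxr : x = r • (r⁻¹ • x) := by
      rw [smul_smul, mul_inv_cancel₀ hr.ne', one_smul]
    calc ‖x - r • v‖ = ‖r • (r⁻¹ • x - v)‖ := by rw [smul_sub]; rw [← hxr]
      _ = r * ‖r⁻¹ • x - v‖ := by rw [norm_smul, Real.norm_eq_abs, abs_of_pos hr]
      _ < r * δ := by exact mul_lt_mul_of_pos_left hv1 hr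
      _ ≤ r * (1 / 2) := mul_le_mul_of_nonneg_left (min_le_left _ _) hr.le
      _ = r / 2 := by ring
  have hsurj : Function.Surjective q :=
    surjective_of_dense_ball d q (fun γ c => sumCLM_single d 1 zero_le_one hd γ c) hdense
  -- Step 2: lift `τ ∘ q` through `π` using the basis of `ℓ¹(Γ)`.
  obtain ⟨C, hC0, hC⟩ := ContinuousLinearMap.exists_preimage_norm_le π hπ
  choose pre hpre1 hpre2 using fun γ => hC (τ (d γ))
  set M : ℝ := C * ‖τ‖ with hMdef
  have hM0 : 0 ≤ M := mul_nonneg hC0.le (norm_nonneg _)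
  have hM : ∀ γ, ‖pre γ‖ ≤ M := by
    intro γ
    refine (hpre2 γ).trans ?_
    rw [hMdef]
    have h1 : ‖τ (d γ)‖ ≤ ‖τ‖ * ‖d γ‖ := τ.le_opNorm _
    have h2 : ‖τ‖ * ‖d γ‖ ≤ ‖τ‖ * 1 := mul_le_mul_of_nonneg_left (hd γ) (norm_nonneg _)
    nlinarith [norm_nonneg (τ (d γ))]
  let L : W →L[ℝ] E := sumCLM pre M hM0 hM
  have hπL : ∀ f : W, π (L f) = τ (q f) := by
    intro f
    show π (sumCLM pre M hM0 hM f) = τ (sumCLM d 1 zero_le_one hd f)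
    rw [sumCLM_apply, sumCLM_apply]
    rw [ContinuousLinearMap.map_tsum π (summable_smul_lp1 f hM),
      ContinuousLinearMap.map_tsum τ (summable_smul_lp1 f hd)]
    refine tsum_congr fun γ => ?_
    rw [ContinuousLinearMap.map_smul, ContinuousLinearMap.map_smul, hpre1]
  -- Step 3: the subspace `Z = q⁻¹(Y)` and the correction map into `F`.
  let Z : Submodule ℝ W := Submodule.comap (q : W →ₗ[ℝ] X) Y
  have hZmem : ∀ w : W, w ∈ Z ↔ q w ∈ Y := fun w => Iff.rfl
  have hZc : IsClosed (Z : Set W) := hY.preimage q.continuous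
  let A : Z →L[ℝ] Y := (q.comp Z.subtypeL).codRestrict Y (fun z => z.2)
  have hA : ∀ z : Z, (A z : X) = q (z : W) := fun z => rfl
  let B : Z →L[ℝ] E := t.comp A - L.comp Z.subtypeL
  have hBdef : ∀ z : Z, B z = t (A z) - L (z : W) := fun z => rfl
  have hB : ∀ z : Z, B z ∈ LinearMap.range (j : F →ₗ[ℝ] E) := by
    intro z
    rw [hexact, LinearMap.mem_ker, hBdef, map_sub]
    have h2 : π (t (A z)) = τ ((A z : X)) := (hτ (A z)).symm
    rw [ContinuousLinearMap.coe_coe, h2, hA, hπL, sub_self]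
  -- the inverse of `j` on its range
  obtain ⟨c, hc0, hcb⟩ := hj
  have hanti : AntilipschitzWith ⟨c⁻¹, by positivity⟩ j := by
    refine ContinuousLinearMap.antilipschitz_of_bound j (fun x => ?_)
    show ‖x‖ ≤ c⁻¹ * ‖j x‖
    rw [le_inv_mul_iff₀ hc0]
    exact hcb x
  have hinj : Function.Injective j := hanti.injective
  have hclo : IsClosed (Set.range j) := hanti.isClosed_range j.uniformContinuous
  let jeq : F ≃L[ℝ] ↥(LinearMap.range (j : F →ₗ[ℝ] E)) := j.equivRange hinj hclo
  have hjeq : ∀ x : F, ((jeq x : E)) = j x := fun x => rfl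
  let s0 : Z →L[ℝ] F :=
    (jeq.symm : ↥(LinearMap.range (j : F →ₗ[ℝ] E)) →L[ℝ] F).comp (B.codRestrict (LinearMap.range (j : F →ₗ[ℝ] E)) hB)
  have hs0 : ∀ z : Z, j (s0 z) = B z := by
    intro z
    have h1 : s0 z = jeq.symm (B.codRestrict (LinearMap.range (j : F →ₗ[ℝ] E)) hB z) := rfl
    rw [h1, ← hjeq, jeq.apply_symm_apply]
    rfl
  -- Step 4: extend the correction map using ℵ-injectivity of `F`.
  have hdW : dens W < ℵ := dens_lp_lt hℵ hΓ
  obtain ⟨S, hS⟩ := hF W hdW Z hZc s0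
  -- Step 5: the extension on `ℓ¹(Γ)` and factorization through `q`.
  let T' : W →L[ℝ] E := L + j.comp S
  have hT'z : ∀ z : Z, T' (z : W) = t (A z) := by
    intro z
    have h1 : T' (z : W) = L (z : W) + j (S (z : W)) := rfl
    rw [h1, hS z, hs0 z, hBdef]
    abel
  let K : Submodule ℝ W := LinearMap.ker (q : W →ₗ[ℝ] X)
  haveI hKc : IsClosed ((K : Submodule ℝ W) : Set W) := ContinuousLinearMap.isClosed_ker q
  let qbar : (W ⧸ K) →L[ℝ] X := quotLift K q le_rfl
  have hqbar : ∀ w : W, qbar (Submodule.Quotient.mk w) = q w := quotLift_mk K q le_rfl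
  have hker : LinearMap.ker (qbar : (W ⧸ K) →ₗ[ℝ] X) = ⊥ := by
    refine LinearMap.ker_eq_bot'.mpr ?_
    intro v hv
    obtain ⟨w, rfl⟩ := Submodule.Quotient.mk_surjective K v
    have hv' : q w = 0 := by rw [← hqbar]; exact hv
    exact (Submodule.Quotient.mk_eq_zero K).mpr (LinearMap.mem_ker.mpr hv')
  have hrange : LinearMap.range (qbar : (W ⧸ K) →ₗ[ℝ] X) = ⊤ := by
    rw [LinearMap.range_eq_top]
    intro x
    obtain ⟨w, hw⟩ := hsurj x
    exact ⟨Submodule.Quotient.mk w, by rw [← hw]; exact hqbar w⟩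
  let ebar := ContinuousLinearEquiv.ofBijective qbar hker hrange
  have hTker : K ≤ LinearMap.ker (T' : W →ₗ[ℝ] E) := by
    intro w hw
    have hwq : q w = 0 := LinearMap.mem_ker.mp hw
    have hwZ : w ∈ Z := by
      rw [hZmem, hwq]
      exact Y.zero_mem
    rw [LinearMap.mem_ker, ContinuousLinearMap.coe_coe]
    have h1 := hT'z ⟨w, hwZ⟩
    have h2 : A ⟨w, hwZ⟩ = 0 := Subtype.ext (by rw [hA]; exact hwq)
    rw [h1, h2, map_zero]
  let Tbar : (W ⧸ K) →L[ℝ] E := quotLift K T' hTker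
  refine ⟨Tbar.comp (ebar.symm : X →L[ℝ] (W ⧸ K)), ?_⟩
  intro y
  obtain ⟨w, hw⟩ := hsurj (y : X)
  have hwZ : w ∈ Z := by rw [hZmem, hw]; exact y.2
  have h1 : ebar (Submodule.Quotient.mk w) = (y : X) := by
    have h0 : ebar (Submodule.Quotient.mk w) = qbar (Submodule.Quotient.mk w) := rfl
    rw [h0, hqbar, hw]
  have h2 : ebar.symm (y : X) = Submodule.Quotient.mk w := by
    rw [← h1, ContinuousLinearEquiv.symm_apply_apply]
  have h3 : (Tbar.comp (ebar.symm : X →L[ℝ] (W ⧸ K))) (y : X) = Tbar (Submodule.Quotient.mk w) := by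
    rw [ContinuousLinearMap.comp_apply]
    have h4 : (ebar.symm : X →L[ℝ] (W ⧸ K)) (y : X) = ebar.symm (y : X) := rfl
    rw [h4, h2]
  rw [h3, quotLift_mk]
  have h5 := hT'z ⟨w, hwZ⟩
  have h6 : A ⟨w, hwZ⟩ = y := Subtype.ext (by rw [hA]; exact hw)
  rw [h6] at h5
  exact h5
end

section
/- For every infinite cardinal ℵ, the Banach space ℓ₁(2^ℵ) embeds isometrically into ℓ_∞(ℵ). -/
open Cardinal

/-- Given a family of ±1-valued functions on `I` indexed by `J` which is
"independent" (every finite sign pattern is realized at some point of `I`),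
`ℓ¹(J)` embeds isometrically into `ℓ∞(I)`. -/
theorem aux_embed {I J : Type} (ε : J → I → ℝ)
    (h1 : ∀ j i, ‖ε j i‖ = 1)
    (hind : ∀ S : Finset J, ∀ σ : J → Bool,
      ∃ i, ∀ j ∈ S, ε j i = (if σ j then 1 else -1)) :
    Nonempty ((lp (fun _ : J => ℝ) 1) →ₗᵢ[ℝ] (lp (fun _ : I => ℝ) ⊤)) := by
  classical
  have hIne : Nonempty I := by
    obtain ⟨i, -⟩ := hind ∅ (fun _ => true); exact ⟨i⟩
  -- summability facts
  have hsum : ∀ f : lp (fun _ : J => ℝ) 1, Summable fun j => ‖f j‖ := by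
    intro f
    have := (memℓp_gen_iff (p := 1) (by norm_num)).1 (lp.memℓp f)
    simpa using this
  have hnorm1 : ∀ f : lp (fun _ : J => ℝ) 1, ‖f‖ = ∑' j, ‖f j‖ := by
    intro f
    have := lp.norm_eq_tsum_rpow (p := 1) (by norm_num) f
    simpa using this
  have hsum' : ∀ (f : lp (fun _ : J => ℝ) 1) (i : I),
      Summable fun j => f j * ε j i := by
    intro f i
    refine Summable.of_norm_bounded (hsum f) fun j => ?_
    rw [norm_mul, h1 j i, mul_one]
  -- the candidate function
  set g : lp (fun _ : J => ℝ) 1 → I → ℝ := fun f i => ∑' j, f j * ε j i with hg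
  have hbd : ∀ (f : lp (fun _ : J => ℝ) 1) (i : I), ‖g f i‖ ≤ ∑' j, ‖f j‖ := by
    intro f i
    refine (norm_tsum_le_tsum_norm ?_).trans ?_
    · refine Summable.of_nonneg_of_le (fun j => norm_nonneg _) (fun j => ?_) (hsum f)
      rw [norm_mul, h1 j i, mul_one]
    · refine Summable.tsum_le_tsum (fun j => ?_) ?_ (hsum f)
      · rw [norm_mul, h1 j i, mul_one]
      · refine Summable.of_nonneg_of_le (fun j => norm_nonneg _) (fun j => ?_) (hsum f)
        rw [norm_mul, h1 j i, mul_one]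
  have hmem : ∀ f : lp (fun _ : J => ℝ) 1, Memℓp (g f) (⊤ : ENNReal) := by
    intro f
    refine memℓp_infty ⟨∑' j, ‖f j‖, ?_⟩
    rintro x ⟨i, rfl⟩
    exact hbd f i
  -- the norm identity
  have hnormmap : ∀ f : lp (fun _ : J => ℝ) 1,
      (⨆ i, ‖g f i‖) = ‖f‖ := by
    intro f
    have hBdd : BddAbove (Set.range fun i => ‖g f i‖) := by
      refine ⟨∑' j, ‖f j‖, ?_⟩
      rintro x ⟨i, rfl⟩
      exact hbd f i
    refine le_antisymm (ciSup_le fun i => (hbd f i).trans (hnorm1 f).ge) ?_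
    rw [hnorm1 f]
    -- for every δ > 0 find i with g f i close to the ℓ¹ norm
    refine le_of_forall_pos_le_add fun δ hδ => ?_
    set t : ℝ := ∑' j, ‖f j‖ with ht
    obtain ⟨S, hS⟩ : ∃ S : Finset J, t - δ / 2 < ∑ j ∈ S, ‖f j‖ := by
      have htend := (hsum f).hasSum
      have : ∀ᶠ s in Filter.atTop, t - δ / 2 < ∑ j ∈ s, ‖f j‖ :=
        htend.eventually (eventually_gt_nhds (by linarith))
      exact this.exists
    obtain ⟨i, hi⟩ := hind S (fun j => decide (0 ≤ f j))
    have hεval : ∀ j ∈ S, f j * ε j i = ‖f j‖ := by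
      intro j hj
      rcases le_or_gt 0 (f j) with h | h
      · rw [hi j hj, if_pos (by simpa using h), mul_one, Real.norm_eq_abs,
          abs_of_nonneg h]
      · rw [hi j hj, if_neg (by simpa using not_le.2 h), Real.norm_eq_abs,
          abs_of_neg h]; ring
    have hsplit := Summable.sum_add_tsum_subtype_compl (hsum' f i) S
    have hsplitn := Summable.sum_add_tsum_subtype_compl (hsum f) S
    have hrest : ‖∑' j : {x // x ∉ S}, (f j : ℝ) * ε j i‖ ≤ t - ∑ j ∈ S, ‖f j‖ := by
      have h1' : (∑' j : {x // x ∉ S}, ‖(f j : ℝ) * ε j i‖)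
          = ∑' j : {x // x ∉ S}, ‖f (j : J)‖ := by
        refine tsum_congr fun j => ?_
        rw [norm_mul, h1 _ i, mul_one]
      calc ‖∑' j : {x // x ∉ S}, (f j : ℝ) * ε j i‖
          ≤ ∑' j : {x // x ∉ S}, ‖(f j : ℝ) * ε j i‖ := by
            refine norm_tsum_le_tsum_norm ?_
            exact ((hsum f).subtype {x | x ∉ S}).congr fun j => by
              simp [Function.comp, norm_mul, h1 _ i]
        _ = ∑' j : {x // x ∉ S}, ‖f (j : J)‖ := h1'
        _ = t - ∑ j ∈ S, ‖f j‖ := by linarith [hsplitn]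
    have hgi : g f i = ∑ j ∈ S, ‖f j‖ + ∑' j : {x // x ∉ S}, (f j : ℝ) * ε j i := by
      rw [hg]
      dsimp only
      rw [← hsplit, Finset.sum_congr rfl hεval]
    have habs : |∑' j : {x // x ∉ S}, (f j : ℝ) * ε j i| ≤ t - ∑ j ∈ S, ‖f j‖ := by
      simpa [Real.norm_eq_abs] using hrest
    have hglow : t - δ ≤ g f i := by
      rw [hgi]
      have h2 : -(t - ∑ j ∈ S, ‖f j‖) ≤ ∑' j : {x // x ∉ S}, (f j : ℝ) * ε j i :=
        neg_le_of_abs_le habs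
      have h3 : t - ∑ j ∈ S, ‖f j‖ < δ / 2 := by linarith
      linarith
    have : t - δ ≤ ‖g f i‖ := hglow.trans (le_abs_self _)
    have hle : ‖g f i‖ ≤ ⨆ i, ‖g f i‖ := le_ciSup hBdd i
    linarith
  -- build the linear isometry
  refine ⟨⟨⟨⟨fun f => ⟨g f, hmem f⟩, ?_⟩, ?_⟩, ?_⟩⟩
  · intro f f'
    ext i
    simp only [hg]
    have : ∀ j, ((f + f' : lp (fun _ : J => ℝ) 1) j : ℝ) * ε j i
        = f j * ε j i + f' j * ε j i := by
      intro j; rw [lp.coeFn_add]; simp [add_mul]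
    calc (∑' j, ((f + f' : lp (fun _ : J => ℝ) 1) j : ℝ) * ε j i)
        = ∑' j, (f j * ε j i + f' j * ε j i) := tsum_congr this
      _ = (∑' j, f j * ε j i) + ∑' j, f' j * ε j i :=
          Summable.tsum_add (hsum' f i) (hsum' f' i)
  · intro c f
    ext i
    simp only [hg]
    have : ∀ j, ((c • f : lp (fun _ : J => ℝ) 1) j : ℝ) * ε j i
        = c * (f j * ε j i) := by
      intro j; rw [lp.coeFn_smul]; simp [mul_assoc]
    calc (∑' j, ((c • f : lp (fun _ : J => ℝ) 1) j : ℝ) * ε j i)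
        = ∑' j, c * (f j * ε j i) := tsum_congr this
      _ = c * ∑' j, f j * ε j i := tsum_mul_left
  · intro f
    show ‖(⟨g f, hmem f⟩ : lp (fun _ : I => ℝ) ⊤)‖ = ‖f‖
    rw [lp.norm_eq_ciSup]
    exact hnormmap f

theorem stmt4
    (ℵ : Cardinal) (hℵ : Cardinal.aleph0 ≤ ℵ)
    (I J : Type) (hI : #I = ℵ) (hJ : #J = 2 ^ ℵ) :
    Nonempty ((lp (fun _ : J => ℝ) 1) →ₗᵢ[ℝ] (lp (fun _ : I => ℝ) ⊤)) := by
  classical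
  have hIinf : Infinite I := by
    rw [Cardinal.infinite_iff, hI]; exact hℵ
  -- an equivalence J ≃ Set I
  obtain ⟨eJ⟩ : Nonempty (J ≃ Set I) := by
    rw [← Cardinal.eq, Cardinal.mk_set, hI, hJ]
  -- an equivalence (Finset I × Finset (Finset I)) ≃ I
  obtain ⟨eK⟩ : Nonempty ((Finset I × Finset (Finset I)) ≃ I) := by
    rw [← Cardinal.eq]
    have h1 : #(Finset I) = #I := Cardinal.mk_finset_of_infinite I
    have h2 : #(Finset (Finset I)) = #I := by
      rw [Cardinal.mk_finset_of_infinite, h1]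
    rw [Cardinal.mk_prod, h1, h2]
    simp only [Cardinal.lift_id]
    exact Cardinal.mul_eq_self (by rw [hI]; exact hℵ)
  set A : J → Set I := fun j => eJ j with hA
  set ε : J → I → ℝ := fun j i =>
    if ((eK.symm i).1.filter (· ∈ A j)) ∈ (eK.symm i).2 then 1 else -1 with hε
  have h1 : ∀ j i, ‖ε j i‖ = 1 := by
    intro j i
    rw [hε]
    dsimp only
    split <;> simp
  have hind : ∀ S : Finset J, ∀ σ : J → Bool,
      ∃ i, ∀ j ∈ S, ε j i = (if σ j then 1 else -1) := by
    intro S σ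
    -- a finite set separating the sets A j, j ∈ S
    have hwit : ∀ p : J × J, ∃ x : I, p.1 ∈ S → p.2 ∈ S → p.1 ≠ p.2 →
        ¬(x ∈ A p.1 ↔ x ∈ A p.2) := by
      rintro ⟨j, j'⟩
      by_cases h : j ∈ S ∧ j' ∈ S ∧ j ≠ j'
      · obtain ⟨hj, hj', hne⟩ := h
        have hAne : A j ≠ A j' := fun hc => hne (eJ.injective hc)
        have : ∃ x, ¬(x ∈ A j ↔ x ∈ A j') := by
          by_contra hc
          push_neg at hc
          exact hAne (Set.ext fun x => hc x)
        obtain ⟨x, hx⟩ := this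
        exact ⟨x, fun _ _ _ => hx⟩
      · obtain ⟨x⟩ : Nonempty I := inferInstance
        refine ⟨x, fun h1 h2 h3 => absurd ⟨h1, h2, h3⟩ h⟩
    choose w hw using hwit
    set F : Finset I := (S ×ˢ S).image w with hF
    have hsep : ∀ j ∈ S, ∀ j' ∈ S, j ≠ j' →
        F.filter (· ∈ A j) ≠ F.filter (· ∈ A j') := by
      intro j hj j' hj' hne hc
      have hxF : w (j, j') ∈ F := Finset.mem_image_of_mem w (Finset.mk_mem_product hj hj')
      have := hw (j, j') hj hj' hne
      have hmem : w (j, j') ∈ F.filter (· ∈ A j) ↔ w (j, j') ∈ F.filter (· ∈ A j') := by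
        rw [hc]
      simp only [Finset.mem_filter, hxF, true_and] at hmem
      exact this hmem
    set 𝒜 : Finset (Finset I) := (S.filter (fun j => σ j)).image
      (fun j => F.filter (· ∈ A j)) with h𝒜
    refine ⟨eK (F, 𝒜), fun j hj => ?_⟩
    rw [hε]
    dsimp only
    rw [Equiv.symm_apply_apply]
    by_cases hσ : σ j
    · rw [if_pos, if_pos hσ]
      rw [h𝒜]
      exact Finset.mem_image_of_mem _ (Finset.mem_filter.2 ⟨hj, hσ⟩)
    · rw [if_neg, if_neg hσ]
      rw [h𝒜]
      intro hc
      obtain ⟨j', hj', hc'⟩ := Finset.mem_image.1 hc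
      obtain ⟨hj'S, hσ'⟩ := Finset.mem_filter.1 hj'
      rcases eq_or_ne j' j with rfl | hne
      · exact hσ hσ'
      · exact hsep j' hj'S j hj hne hc'
  exact aux_embed ε h1 hind
end

section
/- Let ℵ be an infinite cardinal, I a set of cardinality ℵ, and Y a closed subspace of ℓ_∞(I) with density character at most ℵ. Then there exists a closed subspace Z of ℓ_∞(I) isomorphic to c₀(I) such that Y ∩ Z = {0} and Y + Z is closed. -/
set_option maxHeartbeats 1000000
set_option synthInstance.maxHeartbeats 200000

open Cardinal

/-- `c₀(I)`: the closed span in `ℓ_∞(I)` of the characteristic functions of singletons. -/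
noncomputable def czero (I : Type) [DecidableEq I] : Submodule ℝ (lp (fun _ : I => ℝ) ⊤) :=
  (Submodule.span ℝ {f : lp (fun _ : I => ℝ) ⊤ | ∃ i : I, f = lp.single (E := fun _ : I => ℝ) ⊤ i 1}).topologicalClosure

namespace Stmt6Aux

noncomputable section
open scoped Classical ENNReal

variable {I : Type}

def pt (e : I ≃ I × I × Bool) (i j : I) (b : Bool) : I := e.symm ⟨i, j, b⟩

def sb (e : I ≃ I × I × Bool) (v : I → I → ℝ) (i j : I) : Bool :=
  if |v j (pt e i j false)| ≤ |v j (pt e i j true)| then false else true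

def tp (e : I ≃ I × I × Bool) (v : I → I → ℝ) (i j : I) : I := pt e i j (sb e v i j)

def fp (e : I ≃ I × I × Bool) (v : I → I → ℝ) (i j : I) : I := pt e i j (!(sb e v i j))

lemma v_tp_le (e : I ≃ I × I × Bool) (v : I → I → ℝ) (i j : I) :
    |v j (tp e v i j)| ≤ |v j (fp e v i j)| := by
  by_cases h : |v j (pt e i j false)| ≤ |v j (pt e i j true)|
  · simp only [tp, fp, sb, if_pos h, Bool.not_false]
    exact h
  · simp only [tp, fp, sb, if_neg h, Bool.not_true]
    exact (not_le.mp h).le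

lemma e_tp (e : I ≃ I × I × Bool) (v : I → I → ℝ) (i j : I) :
    e (tp e v i j) = ⟨i, j, sb e v i j⟩ := by simp [tp, pt]

lemma e_fp (e : I ≃ I × I × Bool) (v : I → I → ℝ) (i j : I) :
    e (fp e v i j) = ⟨i, j, !(sb e v i j)⟩ := by simp [fp, pt]

lemma tp_ne_fp (e : I ≃ I × I × Bool) (v : I → I → ℝ) (i j i' j' : I) :
    tp e v i j ≠ fp e v i' j' := by
  intro h
  have h2 : (⟨i, j, sb e v i j⟩ : I × I × Bool) = ⟨i', j', !(sb e v i' j')⟩ := by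
    rw [← e_tp e v i j, ← e_fp e v i' j', h]
  obtain ⟨h3, h4, h5⟩ : i = i' ∧ j = j' ∧ sb e v i j = !(sb e v i' j') := by
    simpa [Prod.ext_iff] using h2
  subst h3; subst h4
  exact Bool.not_ne_self _ h5.symm

def phiFun (e : I ≃ I × I × Bool) (v : I → I → ℝ) (h : I → ℝ) (x : I) : ℝ :=
  if x = tp e v (e x).1 (e x).2.1 then h (e x).1 else 0

lemma phiFun_tp (e : I ≃ I × I × Bool) (v : I → I → ℝ) (h : I → ℝ) (i j : I) :
    phiFun e v h (tp e v i j) = h i := by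
  simp [phiFun, e_tp]

lemma phiFun_fp (e : I ≃ I × I × Bool) (v : I → I → ℝ) (h : I → ℝ) (i j : I) :
    phiFun e v h (fp e v i j) = 0 := by
  unfold phiFun
  rw [e_fp]
  exact if_neg fun hcon => tp_ne_fp e v i j i j hcon.symm

lemma abs_phiFun_le (e : I ≃ I × I × Bool) (v : I → I → ℝ) (h : I → ℝ) (C : ℝ)
    (hC : 0 ≤ C) (hb : ∀ i, |h i| ≤ C) (x : I) : |phiFun e v h x| ≤ C := by
  unfold phiFun; split_ifs
  · exact hb _
  · simpa using hC

lemma phiFun_add (e : I ≃ I × I × Bool) (v : I → I → ℝ) (h g : I → ℝ) (x : I) :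
    phiFun e v (h + g) x = phiFun e v h x + phiFun e v g x := by
  unfold phiFun; split_ifs <;> simp

lemma phiFun_smul (e : I ≃ I × I × Bool) (v : I → I → ℝ) (c : ℝ) (h : I → ℝ) (x : I) :
    phiFun e v (c • h) x = c * phiFun e v h x := by
  unfold phiFun; split_ifs <;> simp


lemma memPhi (e : I ≃ I × I × Bool) (v : I → I → ℝ) (h : lp (fun _ : I => ℝ) ⊤) :
    Memℓp (phiFun e v ⇑h) (⊤ : ℝ≥0∞) := by
  apply memℓp_infty
  refine ⟨‖h‖, ?_⟩
  rintro r ⟨x, rfl⟩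
  show ‖phiFun e v (⇑h) x‖ ≤ ‖h‖
  rw [Real.norm_eq_abs]
  refine abs_phiFun_le e v ⇑h ‖h‖ (norm_nonneg _) (fun i => ?_) x
  rw [← Real.norm_eq_abs]
  exact lp.norm_apply_le_norm ENNReal.top_ne_zero h i

def PhiL (e : I ≃ I × I × Bool) (v : I → I → ℝ) :
    lp (fun _ : I => ℝ) ⊤ →ₗ[ℝ] lp (fun _ : I => ℝ) ⊤ where
  toFun h := ⟨phiFun e v ⇑h, memPhi e v h⟩
  map_add' h g := by
    apply lp.ext
    funext x
    simp only [lp.coeFn_add, Pi.add_apply]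
    exact phiFun_add e v ⇑h ⇑g x
  map_smul' c h := by
    apply lp.ext
    funext x
    simp only [lp.coeFn_smul, Pi.smul_apply, RingHom.id_apply, smul_eq_mul]
    exact phiFun_smul e v c ⇑h x

lemma PhiL_apply (e : I ≃ I × I × Bool) (v : I → I → ℝ) (h : lp (fun _ : I => ℝ) ⊤) (x : I) :
    (PhiL e v h : ∀ _ : I, ℝ) x = phiFun e v (⇑h) x := rfl

def Phi (e : I ≃ I × I × Bool) (v : I → I → ℝ) [Nonempty I] :
    lp (fun _ : I => ℝ) ⊤ →ₗᵢ[ℝ] lp (fun _ : I => ℝ) ⊤ where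
  toLinearMap := PhiL e v
  norm_map' h := by
    apply le_antisymm
    · refine lp.norm_le_of_forall_le (norm_nonneg h) fun x => ?_
      rw [PhiL_apply, Real.norm_eq_abs]
      refine abs_phiFun_le e v ⇑h ‖h‖ (norm_nonneg _) (fun i => ?_) x
      rw [← Real.norm_eq_abs]
      exact lp.norm_apply_le_norm ENNReal.top_ne_zero h i
    · refine lp.norm_le_of_forall_le (norm_nonneg _) fun i => ?_
      have h1 : (PhiL e v h : ∀ _ : I, ℝ) (tp e v i (Classical.arbitrary I)) = h i := by
        rw [PhiL_apply, phiFun_tp]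
      calc ‖h i‖ = ‖(PhiL e v h : ∀ _ : I, ℝ) (tp e v i (Classical.arbitrary I))‖ := by rw [h1]
        _ ≤ ‖PhiL e v h‖ := lp.norm_apply_le_norm ENNReal.top_ne_zero _ _

lemma Phi_apply (e : I ≃ I × I × Bool) (v : I → I → ℝ) [Nonempty I]
    (h : lp (fun _ : I => ℝ) ⊤) (x : I) :
    (Phi e v h : ∀ _ : I, ℝ) x = phiFun e v (⇑h) x := rfl

end
end Stmt6Aux

open Stmt6Aux in
theorem main_aux {E : Type} [NormedAddCommGroup E] [NormedSpace ℝ E] [CompleteSpace E]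
    (Y C : Submodule ℝ E) (hYc : IsClosed (Y : Set E)) (hCc : IsClosed (C : Set E))
    (Φ : E →ₗᵢ[ℝ] E)
    (key : ∀ h w, w ∈ Y → ‖h‖ ≤ 2 * ‖Φ h - w‖) :
    ∃ Z : Submodule ℝ E, IsClosed (Z : Set E) ∧ Nonempty (↥Z ≃L[ℝ] ↥C) ∧ Y ⊓ Z = ⊥ ∧
      IsClosed ((Y ⊔ Z : Submodule ℝ E) : Set E) := by
  haveI : CompleteSpace C := hCc.completeSpace_coe
  refine ⟨LinearMap.range (Φ.comp (Submodule.subtypeₗᵢ C)).toLinearMap, ?_, ?_, ?_, ?_⟩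
  · rw [LinearMap.coe_range, LinearIsometry.coe_toLinearMap]
    exact ((Φ.comp (Submodule.subtypeₗᵢ C)).isometry.isClosedEmbedding).isClosed_range
  · exact ⟨((Φ.comp (Submodule.subtypeₗᵢ C)).equivRange.toContinuousLinearEquiv).symm⟩
  · rw [eq_bot_iff]
    intro x hx
    obtain ⟨hxY, hxZ⟩ := Submodule.mem_inf.mp hx
    obtain ⟨a, rfl⟩ := LinearMap.mem_range.mp hxZ
    have hk := key (↑a) ((Φ.comp (Submodule.subtypeₗᵢ C)).toLinearMap a) hxY
    have he : Φ (↑a) = (Φ.comp (Submodule.subtypeₗᵢ C)).toLinearMap a := rfl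
    rw [he, sub_self, norm_zero, mul_zero] at hk
    have ha : (a : E) = 0 := norm_le_zero_iff.mp hk
    rw [Submodule.mem_bot, ← he, ha, map_zero]
  · rw [← isSeqClosed_iff_isClosed]
    intro x p hx hp
    have hmem : ∀ n, ∃ y ∈ Y, ∃ z ∈ LinearMap.range (Φ.comp (Submodule.subtypeₗᵢ C)).toLinearMap,
        y + z = x n := fun n => Submodule.mem_sup.mp (hx n)
    choose y hy z hz hyz using hmem
    choose a ha using fun n => LinearMap.mem_range.mp (hz n)
    have ha' : ∀ n, Φ (↑(a n)) = z n := fun n => ha n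
    have hxc : CauchySeq x := hp.cauchySeq
    have hbound : ∀ n m, dist (a n) (a m) ≤ 2 * dist (x n) (x m) := by
      intro n m
      have hw : y m - y n ∈ Y := Y.sub_mem (hy m) (hy n)
      have hk := key (↑(a n) - ↑(a m)) (y m - y n) hw
      have he : Φ (↑(a n) - ↑(a m)) - (y m - y n) = x n - x m := by
        rw [map_sub, ha' n, ha' m, ← hyz n, ← hyz m]
        abel
      rw [he] at hk
      have hd : dist (a n) (a m) = ‖((a n : E) - (a m : E))‖ := by
        rw [Subtype.dist_eq, dist_eq_norm]
      rw [hd, dist_eq_norm]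
      exact hk
    have hac : CauchySeq a := by
      rw [Metric.cauchySeq_iff] at hxc ⊢
      intro ε hε
      obtain ⟨N, hN⟩ := hxc (ε / 2) (half_pos hε)
      exact ⟨N, fun n hn m hm =>
        lt_of_le_of_lt (hbound n m) (by linarith [hN n hn m hm])⟩
    obtain ⟨l, hl⟩ := cauchySeq_tendsto_of_complete hac
    have hzl : Filter.Tendsto (fun n => Φ (↑(a n))) Filter.atTop (nhds (Φ (↑l))) := by
      have hc : Continuous fun b : C => Φ (↑b) := (Φ.continuous).comp continuous_subtype_val
      exact (hc.tendsto l).comp hl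
    have hyl : Filter.Tendsto y Filter.atTop (nhds (p - Φ (↑l))) := by
      refine Filter.Tendsto.congr (fun n => ?_) (hp.sub hzl)
      rw [ha' n, ← hyz n]
      abel
    have hpY : p - Φ (↑l) ∈ Y := hYc.mem_of_tendsto hyl (Filter.Eventually.of_forall hy)
    refine Submodule.mem_sup.mpr ⟨p - Φ (↑l), hpY, Φ (↑l),
      LinearMap.mem_range.mpr ⟨l, rfl⟩, ?_⟩
    abel

theorem stmt6
    (ℵ : Cardinal) (hℵ : Cardinal.aleph0 ≤ ℵ)
    (I : Type) [DecidableEq I] (hI : #I = ℵ)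
    (Y : Submodule ℝ (lp (fun _ : I => ℝ) ⊤))
    (hYc : IsClosed (Y : Set (lp (fun _ : I => ℝ) ⊤)))
    (hYd : dens Y ≤ ℵ) :
    ∃ Z : Submodule ℝ (lp (fun _ : I => ℝ) ⊤),
      IsClosed (Z : Set (lp (fun _ : I => ℝ) ⊤)) ∧
      Nonempty (Z ≃L[ℝ] czero I) ∧
      Y ⊓ Z = ⊥ ∧
      IsClosed ((Y ⊔ Z : Submodule ℝ (lp (fun _ : I => ℝ) ⊤)) : Set (lp (fun _ : I => ℝ) ⊤)) := by
  classical
  haveI hne : Nonempty I := by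
    rw [← Cardinal.mk_ne_zero_iff, hI]
    exact (Cardinal.aleph0_pos.trans_le hℵ).ne'
  -- an equivalence I ≃ I × I × Bool
  have h2a : (2 : Cardinal) ≤ ℵ := by
    refine le_trans ?_ hℵ
    exact_mod_cast (Cardinal.nat_lt_aleph0 2).le
  have h1a : (1 : Cardinal) ≤ ℵ * 2 := by
    refine le_trans (le_trans Cardinal.one_le_aleph0 hℵ) ?_
    calc ℵ = ℵ * 1 := (mul_one ℵ).symm
      _ ≤ ℵ * 2 := mul_le_mul' le_rfl (by norm_num)
  have hcard : #(I × I × Bool) = #I := by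
    rw [Cardinal.mk_prod, Cardinal.mk_prod, Cardinal.lift_id, Cardinal.lift_id,
      Cardinal.lift_id, Cardinal.mk_bool, hI]
    apply le_antisymm
    · calc ℵ * (ℵ * 2) ≤ ℵ * (ℵ * ℵ) := mul_le_mul' le_rfl (mul_le_mul' le_rfl h2a)
        _ = ℵ := by rw [Cardinal.mul_eq_self hℵ, Cardinal.mul_eq_self hℵ]
    · calc ℵ = ℵ * 1 := (mul_one ℵ).symm
        _ ≤ ℵ * (ℵ * 2) := mul_le_mul' le_rfl h1a
  obtain ⟨e⟩ : Nonempty (I ≃ I × I × Bool) := Cardinal.eq.mp hcard.symm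
  -- a dense family in Y indexed by I
  haveI hYne : Nonempty Y := ⟨0⟩
  have hnc : {c | ∃ s : Set Y, Dense s ∧ #s = c}.Nonempty :=
    ⟨#(Set.univ : Set Y), Set.univ, dense_univ, rfl⟩
  have hmem := csInf_mem hnc
  simp only [Set.mem_setOf_eq] at hmem
  obtain ⟨s, hsd, hsc⟩ := hmem
  have hsle : #s ≤ #I := by rw [hsc, hI]; exact hYd
  haveI hsne : Nonempty ↥s := (hsd.nonempty).to_subtype
  obtain ⟨emb⟩ : Nonempty (↥s ↪ I) := (Cardinal.le_def ↥s I).mp hsle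
  have hg : Function.Surjective (Function.invFun emb) :=
    Function.invFun_surjective emb.injective
  set u : I → Y := fun i => ((Function.invFun emb i : ↥s) : Y) with hu_def
  have hu : DenseRange u := by
    have hr : Set.range u = (s : Set Y) := by
      ext w
      constructor
      · rintro ⟨i, rfl⟩
        exact (Function.invFun emb i).2
      · intro hw
        obtain ⟨i, hi⟩ := hg ⟨w, hw⟩
        exact ⟨i, by rw [hu_def]; simp only [hi]⟩
    unfold DenseRange
    rw [hr]
    exact hsd
  set v : I → I → ℝ := fun j => ((u j : lp (fun _ : I => ℝ) ⊤) : ∀ _ : I, ℝ) with hv_def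
  have hveq : ∀ j x, ((u j : lp (fun _ : I => ℝ) ⊤) : ∀ _ : I, ℝ) x = v j x := fun _ _ => rfl
  -- the key estimate
  have key : ∀ (h w : lp (fun _ : I => ℝ) ⊤), w ∈ Y →
      ‖h‖ ≤ 2 * ‖Stmt6Aux.Phi e v h - w‖ := by
    intro h w hw
    refine lp.norm_le_of_forall_le (by positivity) fun i => ?_
    refine le_of_forall_pos_le_add fun ε hε => ?_
    obtain ⟨j, hj⟩ := hu.exists_dist_lt (⟨w, hw⟩ : Y) (half_pos hε)
    have hj' : ‖(u j : lp (fun _ : I => ℝ) ⊤) - w‖ < ε / 2 := by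
      have hd : dist (⟨w, hw⟩ : Y) (u j) = ‖(u j : lp (fun _ : I => ℝ) ⊤) - w‖ := by
        rw [Subtype.dist_eq, dist_eq_norm, norm_sub_rev]
      rwa [hd] at hj
    have hA : (Stmt6Aux.Phi e v h : ∀ _ : I, ℝ) (Stmt6Aux.tp e v i j) = h i := by
      rw [Stmt6Aux.Phi_apply, Stmt6Aux.phiFun_tp]
    have hB : (Stmt6Aux.Phi e v h : ∀ _ : I, ℝ) (Stmt6Aux.fp e v i j) = 0 := by
      rw [Stmt6Aux.Phi_apply]
      exact Stmt6Aux.phiFun_fp e v (⇑h) i j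
    have hC : |v j (Stmt6Aux.tp e v i j)| ≤ |v j (Stmt6Aux.fp e v i j)| :=
      Stmt6Aux.v_tp_le e v i j
    have n1 : |h i - w (Stmt6Aux.tp e v i j)| ≤ ‖Stmt6Aux.Phi e v h - w‖ := by
      have hn := lp.norm_apply_le_norm ENNReal.top_ne_zero
        (Stmt6Aux.Phi e v h - w) (Stmt6Aux.tp e v i j)
      rwa [lp.coeFn_sub, Pi.sub_apply, hA, Real.norm_eq_abs] at hn
    have n2 : |v j (Stmt6Aux.tp e v i j) - w (Stmt6Aux.tp e v i j)| ≤
        ‖(u j : lp (fun _ : I => ℝ) ⊤) - w‖ := by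
      have hn := lp.norm_apply_le_norm ENNReal.top_ne_zero
        ((u j : lp (fun _ : I => ℝ) ⊤) - w) (Stmt6Aux.tp e v i j)
      rwa [lp.coeFn_sub, Pi.sub_apply, Real.norm_eq_abs, hveq] at hn
    have n3 : |v j (Stmt6Aux.fp e v i j) - w (Stmt6Aux.fp e v i j)| ≤
        ‖(u j : lp (fun _ : I => ℝ) ⊤) - w‖ := by
      have hn := lp.norm_apply_le_norm ENNReal.top_ne_zero
        ((u j : lp (fun _ : I => ℝ) ⊤) - w) (Stmt6Aux.fp e v i j)
      rwa [lp.coeFn_sub, Pi.sub_apply, Real.norm_eq_abs, hveq] at hn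
    have n4 : |w (Stmt6Aux.fp e v i j)| ≤ ‖Stmt6Aux.Phi e v h - w‖ := by
      have hn := lp.norm_apply_le_norm ENNReal.top_ne_zero
        (Stmt6Aux.Phi e v h - w) (Stmt6Aux.fp e v i j)
      rw [lp.coeFn_sub, Pi.sub_apply, hB, Real.norm_eq_abs, zero_sub, abs_neg] at hn
      exact hn
    have t1 : |h i| - |w (Stmt6Aux.tp e v i j)| ≤ |h i - w (Stmt6Aux.tp e v i j)| :=
      abs_sub_abs_le_abs_sub _ _
    have t2 : |w (Stmt6Aux.tp e v i j)| - |v j (Stmt6Aux.tp e v i j)| ≤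
        |w (Stmt6Aux.tp e v i j) - v j (Stmt6Aux.tp e v i j)| := abs_sub_abs_le_abs_sub _ _
    have t2' : |w (Stmt6Aux.tp e v i j) - v j (Stmt6Aux.tp e v i j)| =
        |v j (Stmt6Aux.tp e v i j) - w (Stmt6Aux.tp e v i j)| := abs_sub_comm _ _
    have t3 : |v j (Stmt6Aux.fp e v i j)| - |w (Stmt6Aux.fp e v i j)| ≤
        |v j (Stmt6Aux.fp e v i j) - w (Stmt6Aux.fp e v i j)| := abs_sub_abs_le_abs_sub _ _
    rw [Real.norm_eq_abs]
    linarith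
  obtain ⟨Z, hZ1, hZ2, hZ3, hZ4⟩ := main_aux Y (czero I) hYc
    (Submodule.isClosed_topologicalClosure _) (Stmt6Aux.Phi e v) key
  exact ⟨Z, hZ1, hZ2, hZ3, hZ4⟩
end

section
/- In ℓ_∞(S) (for any set S), every family of mutually intersecting closed balls has nonempty intersection; in particular two closed balls B(x,r) and B(y,s) intersect if and only if ‖x − y‖ ≤ r + s. -/
open Cardinal

theorem stmt8 (S : Type) :
    (∀ (ι : Type) (x : ι → lp (fun _ : S => ℝ) ⊤) (r : ι → ℝ),
      (∀ i j, (Metric.closedBall (x i) (r i) ∩ Metric.closedBall (x j) (r j)).Nonempty) →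
      (⋂ i, Metric.closedBall (x i) (r i)).Nonempty) ∧
    (∀ (x y : lp (fun _ : S => ℝ) ⊤) (r s : ℝ), 0 ≤ r → 0 ≤ s →
      ((Metric.closedBall x r ∩ Metric.closedBall y s).Nonempty ↔ ‖x - y‖ ≤ r + s)) := by
  constructor
  · intro ι x r hpair
    rcases isEmpty_or_nonempty ι with hι | hι
    · refine ⟨0, ?_⟩
      simp [Set.iInter_of_empty]
    · obtain ⟨i₀⟩ := hι
      haveI : Nonempty ι := ⟨i₀⟩
      -- pointwise bounds from pairwise intersection
      have key : ∀ i j (s : S), (x i : ∀ _ : S, ℝ) s - r i ≤ (x j : ∀ _ : S, ℝ) s + r j := by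
        intro i j s
        obtain ⟨z, hzi, hzj⟩ := hpair i j
        rw [Metric.mem_closedBall, dist_eq_norm] at hzi hzj
        have h1 : ‖(z - x i : lp (fun _ : S => ℝ) ⊤) s‖ ≤ r i :=
          le_trans (lp.norm_apply_le_norm ENNReal.top_ne_zero _ s) hzi
        have h2 : ‖(z - x j : lp (fun _ : S => ℝ) ⊤) s‖ ≤ r j :=
          le_trans (lp.norm_apply_le_norm ENNReal.top_ne_zero _ s) hzj
        rw [lp.coeFn_sub, Pi.sub_apply, Real.norm_eq_abs, abs_le] at h1 h2
        linarith [h1.1, h1.2, h2.1, h2.2]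
      set f : S → ℝ := fun s => ⨆ i, ((x i : ∀ _ : S, ℝ) s - r i) with hf
      have hbdd : ∀ s : S, BddAbove (Set.range fun i => (x i : ∀ _ : S, ℝ) s - r i) := by
        intro s
        exact ⟨(x i₀ : ∀ _ : S, ℝ) s + r i₀, by rintro _ ⟨i, rfl⟩; exact key i i₀ s⟩
      have hlow : ∀ j (s : S), (x j : ∀ _ : S, ℝ) s - r j ≤ f s := fun j s =>
        le_ciSup (hbdd s) j
      have hhigh : ∀ j (s : S), f s ≤ (x j : ∀ _ : S, ℝ) s + r j := fun j s =>
        ciSup_le fun i => key i j s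
      have hmem : Memℓp f ⊤ := by
        apply memℓp_infty
        refine ⟨‖x i₀‖ + |r i₀|, ?_⟩
        rintro _ ⟨s, rfl⟩
        have h1 := hlow i₀ s
        have h2 := hhigh i₀ s
        have h3 : ‖(x i₀ : ∀ _ : S, ℝ) s‖ ≤ ‖x i₀‖ :=
          lp.norm_apply_le_norm ENNReal.top_ne_zero _ s
        show ‖f s‖ ≤ _
        rw [Real.norm_eq_abs] at h3 ⊢
        rw [abs_le] at h3 ⊢
        obtain h4 | h4 := abs_cases (r i₀) <;>
          exact ⟨by linarith [h3.1, h3.2, h4.1, h4.2], by linarith [h3.1, h3.2, h4.1, h4.2]⟩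
      refine ⟨⟨f, hmem⟩, ?_⟩
      rw [Set.mem_iInter]
      intro j
      rw [Metric.mem_closedBall, dist_eq_norm]
      have hrj : 0 ≤ r j := by
        obtain ⟨z, hz, -⟩ := hpair j j
        rw [Metric.mem_closedBall] at hz
        exact le_trans dist_nonneg hz
      apply lp.norm_le_of_forall_le hrj
      intro s
      have h1 := hlow j s
      have h2 := hhigh j s
      have hco : ((⟨f, hmem⟩ : lp (fun _ : S => ℝ) ⊤) : ∀ _ : S, ℝ) = f := rfl
      rw [lp.coeFn_sub, Pi.sub_apply, hco, Real.norm_eq_abs, abs_le]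
      constructor <;> linarith
  · intro x y r s hr hs
    constructor
    · rintro ⟨z, hz1, hz2⟩
      rw [Metric.mem_closedBall, dist_eq_norm] at hz1 hz2
      calc ‖x - y‖ = ‖(z - y) - (z - x)‖ := by ring_nf
        _ ≤ ‖z - y‖ + ‖z - x‖ := norm_sub_le _ _
        _ ≤ r + s := by linarith
    · intro h
      rcases eq_or_lt_of_le (add_nonneg hr hs) with heq | hpos
      · have hx : x = y := by
          rw [← sub_eq_zero]
          have : ‖x - y‖ ≤ 0 := by linarith
          exact norm_le_zero_iff.mp this
        exact ⟨x, by simp [hr], by simp [hx, hs]⟩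
      · refine ⟨x + (r / (r + s)) • (y - x), ?_, ?_⟩ <;>
          rw [Metric.mem_closedBall, dist_eq_norm]
        · have : x + (r / (r + s)) • (y - x) - x = (r / (r + s)) • (y - x) := by abel
          rw [this, norm_smul, Real.norm_eq_abs, abs_of_nonneg (div_nonneg hr hpos.le)]
          rw [norm_sub_rev] at h
          calc r / (r + s) * ‖y - x‖ ≤ r / (r + s) * (r + s) :=
                mul_le_mul_of_nonneg_left h (div_nonneg hr hpos.le)
            _ = r := div_mul_cancel₀ r hpos.ne'
        · have h1 : x + (r / (r + s)) • (y - x) - y = (1 - r / (r + s)) • (x - y) := by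
            rw [sub_smul, one_smul, smul_sub, smul_sub]
            abel
          have h2 : 1 - r / (r + s) = s / (r + s) := by
            field_simp
            ring
          rw [h1, h2, norm_smul, Real.norm_eq_abs, abs_of_nonneg (div_nonneg hs hpos.le)]
          calc s / (r + s) * ‖x - y‖ ≤ s / (r + s) * (r + s) :=
                mul_le_mul_of_nonneg_left h (div_nonneg hs hpos.le)
            _ = s := div_mul_cancel₀ s hpos.ne'
end

section
/- Let K be a compact Hausdorff space with a Hausdorff gap in its algebra of clopen sets: there exist families of clopen sets (a_i)_{i<ω₁} increasing and (b_i)_{i<ω₁} decreasing with a_i ⊆ b_j for all i,j < ω₁ but no clopen set c with a_i ⊆ c ⊆ b_j for all i,j. Then the family of characteristic functions {χ_{a_i}} and {χ_{b_j}} witnesses the failure of the interpolation property: χ_{a_i} ≤ χ_{b_j} for all i,j, but if K is strongly zero-dimensional there is no h ∈ C(K) with χ_{a_i} ≤ h ≤ χ_{b_j} for all i,j. -/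
open Cardinal

theorem stmt12
    (K : Type) [TopologicalSpace K] [CompactSpace K] [T2Space K]
    [TotallyDisconnectedSpace K]
    -- K is strongly zero-dimensional: disjoint zero sets are separated by a clopen set
    (hsz : ∀ Z₁ Z₂ : Set K, (∃ f : C(K, ℝ), Z₁ = {x | f x = 0}) →
      (∃ f : C(K, ℝ), Z₂ = {x | f x = 0}) → Disjoint Z₁ Z₂ →
      ∃ c : Set K, IsClopen c ∧ Z₁ ⊆ c ∧ Disjoint Z₂ c)
    -- a Hausdorff gap in the algebra of clopen sets, indexed by the ordinals below ω₁
    (a b : {i : Ordinal // i < (Cardinal.aleph 1).ord} → Set K)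
    (ha : ∀ i, IsClopen (a i)) (hb : ∀ i, IsClopen (b i))
    (hamono : Monotone a) (hbanti : Antitone b)
    (hab : ∀ i j, a i ⊆ b j)
    (hgap : ¬ ∃ c : Set K, IsClopen c ∧ ∀ i j, a i ⊆ c ∧ c ⊆ b j) :
    (∀ i j (x : K), Set.indicator (a i) (fun _ => (1 : ℝ)) x ≤
        Set.indicator (b j) (fun _ => (1 : ℝ)) x) ∧
    ¬ ∃ h : C(K, ℝ), ∀ i j (x : K),
        Set.indicator (a i) (fun _ => (1 : ℝ)) x ≤ h x ∧
        h x ≤ Set.indicator (b j) (fun _ => (1 : ℝ)) x := by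

  constructor
  · intro i j x
    by_cases hx : x ∈ a i
    · rw [Set.indicator_of_mem hx, Set.indicator_of_mem (hab i j hx)]
    · rw [Set.indicator_of_notMem hx]
      exact Set.indicator_nonneg (fun _ _ => zero_le_one) x
  · rintro ⟨h, hh⟩
    apply hgap
    have h1 : ∃ f : C(K, ℝ), {x | 1 ≤ h x} = {x | f x = 0} := by
      refine ⟨(h - 1) ⊓ 0, ?_⟩
      ext x
      simp only [Set.mem_setOf_eq, ContinuousMap.inf_apply, ContinuousMap.sub_apply,
        ContinuousMap.one_apply, ContinuousMap.zero_apply, min_eq_right_iff]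
      constructor <;> intro hx <;> linarith
    have h2 : ∃ f : C(K, ℝ), {x | h x ≤ 0} = {x | f x = 0} := by
      refine ⟨h ⊔ 0, ?_⟩
      ext x
      simp only [Set.mem_setOf_eq, ContinuousMap.sup_apply, ContinuousMap.zero_apply]
      constructor
      · intro hx; rw [max_eq_right hx]
      · intro hx
        rcases le_or_gt (h x) 0 with h' | h'
        · exact h'
        · rw [max_eq_left h'.le] at hx; linarith
    have hdisj : Disjoint {x : K | 1 ≤ h x} {x : K | h x ≤ 0} := by
      rw [Set.disjoint_left]; intro x hx hx'
      simp only [Set.mem_setOf_eq] at hx hx'; linarith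
    obtain ⟨c, hc, hc1, hc2⟩ := hsz _ _ h1 h2 hdisj
    refine ⟨c, hc, fun i j => ⟨?_, ?_⟩⟩
    · intro x hx
      apply hc1
      have := (hh i j x).1
      rw [Set.indicator_of_mem hx] at this
      exact this
    · intro x hx
      by_contra hxb
      have := (hh i j x).2
      rw [Set.indicator_of_notMem hxb] at this
      exact Set.disjoint_left.mp hc2 this hx
end

section
/- For a compact Hausdorff space K and a cardinal ℵ, the following are equivalent: (1) every open cover of every subspace of K has a subcover of cardinality less than ℵ; (2) every open subset of K is the union of fewer than ℵ closed subsets of K. -/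
open Cardinal

theorem stmt13
    (K : Type) [TopologicalSpace K] [CompactSpace K] [T2Space K]
    (ℵ : Cardinal) (hℵ : Cardinal.aleph0 ≤ ℵ) :
    (∀ (S : Set K) (ι : Type) (U : ι → Set K), (∀ i, IsOpen (U i)) → S ⊆ ⋃ i, U i →
        ∃ s : Set ι, #s < ℵ ∧ S ⊆ ⋃ i ∈ s, U i) ↔
    (∀ V : Set K, IsOpen V →
        ∃ (ι : Type) (C : ι → Set K), #ι < ℵ ∧ (∀ i, IsClosed (C i)) ∧ V = ⋃ i, C i) := by
  constructor
  · intro h1 V hV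
    have hC : ∀ x : V, ∃ t : Set K, t ∈ nhds (x : K) ∧ IsClosed t ∧ t ⊆ V := fun x =>
      exists_mem_nhds_isClosed_subset (hV.mem_nhds x.2)
    choose C hCn hCc hCs using hC
    obtain ⟨s, hs, hcov⟩ := h1 V V (fun x => interior (C x)) (fun x => isOpen_interior)
      (fun y hy => Set.mem_iUnion.2 ⟨⟨y, hy⟩, mem_interior_iff_mem_nhds.2 (hCn ⟨y, hy⟩)⟩)
    refine ⟨s, fun x => C x, hs, fun x => hCc x, ?_⟩
    apply Set.Subset.antisymm
    · intro y hy
      obtain ⟨x, hx, hyx⟩ := Set.mem_iUnion₂.1 (hcov hy)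
      exact Set.mem_iUnion.2 ⟨⟨x, hx⟩, interior_subset hyx⟩
    · intro y hy
      obtain ⟨x, hx⟩ := Set.mem_iUnion.1 hy
      exact hCs _ hx
  · intro h2 S ι U hU hS
    obtain ⟨ι', C, hκ, hCc, hVeq⟩ := h2 (⋃ i, U i) (isOpen_iUnion hU)
    have hsub : ∀ j, ∃ t : Finset ι, C j ⊆ ⋃ i ∈ t, U i := fun j => by
      have hcomp : IsCompact (C j) := (hCc j).isCompact
      exact hcomp.elim_finite_subcover U hU (hVeq ▸ Set.subset_iUnion C j)
    choose t ht using hsub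
    refine ⟨⋃ j, (t j : Set ι), ?_, ?_⟩
    · by_cases hfin : #ι' < aleph0
      · haveI : Finite ι' := Cardinal.lt_aleph0_iff_finite.1 hfin
        have hf : (⋃ j, ((t j : Set ι))).Finite := Set.finite_iUnion fun j => (t j).finite_toSet
        exact lt_of_lt_of_le hf.lt_aleph0 hℵ
      · push_neg at hfin
        haveI : Nonempty ι' := Cardinal.mk_ne_zero_iff.1 (ne_of_gt (lt_of_lt_of_le aleph0_pos hfin))
        have h0 : aleph0 < ℵ := lt_of_le_of_lt hfin hκ
        calc #(⋃ j, ((t j : Set ι))) ≤ #ι' * ⨆ j, #(t j : Set ι) := Cardinal.mk_iUnion_le _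
          _ ≤ #ι' * aleph0 := by
              apply mul_le_mul_right
              exact ciSup_le fun j => le_of_lt ((t j).finite_toSet.lt_aleph0)
          _ < ℵ := Cardinal.mul_lt_of_lt hℵ hκ h0
    · intro y hy
      have hyV : y ∈ ⋃ j, C j := hVeq ▸ hS hy
      obtain ⟨j, hj⟩ := Set.mem_iUnion.1 hyV
      obtain ⟨i, hi, hyi⟩ := Set.mem_iUnion₂.1 (ht j hj)
      exact Set.mem_iUnion₂.2 ⟨i, Set.mem_iUnion.2 ⟨j, hi⟩, hyi⟩
end

section
/- Let K be a compact Hausdorff space that is projective with respect to continuous surjections between compact Hausdorff spaces of weight less than ℵ, where ℵ is uncountable. Then K is zero-dimensional and an F_ℵ-space: any two disjoint open subsets of K, each a union of fewer than ℵ closed sets, are separated by a clopen set. -/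
open Cardinal

/-- The weight of a topological space: the least cardinality of a base for the topology. -/
noncomputable def tweight (X : Type) [TopologicalSpace X] : Cardinal :=
  sInf {c | ∃ B : Set (Set X), TopologicalSpace.IsTopologicalBasis B ∧ #B = c}

/-- `s` is a union of fewer than `ℵ` closed subsets of `K`. -/
def UnionLtClosed (K : Type) [TopologicalSpace K] (ℵ : Cardinal) (s : Set K) : Prop :=
  ∃ (ι : Type) (C : ι → Set K), #ι < ℵ ∧ (∀ i, IsClosed (C i)) ∧ s = ⋃ i, C i


section Aux
open TopologicalSpace Set

lemma tweight_le_of_basis {X : Type} [TopologicalSpace X] {B : Set (Set X)}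
    (hB : IsTopologicalBasis B) : tweight X ≤ #B :=
  csInf_le (OrderBot.bddBelow _) ⟨B, hB, rfl⟩

lemma exists_basis_of_tweight_lt {X : Type} [TopologicalSpace X] {ℵ : Cardinal}
    (h : tweight X < ℵ) : ∃ B : Set (Set X), IsTopologicalBasis B ∧ #B < ℵ := by
  have hne : {c | ∃ B : Set (Set X), IsTopologicalBasis B ∧ #B = c}.Nonempty :=
    ⟨_, {U | IsOpen U}, isTopologicalBasis_opens, rfl⟩
  obtain ⟨B, hB, hc⟩ := csInf_mem hne
  exact ⟨B, hB, by rw [hc]; exact h⟩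

lemma tweight_subtype_lt {X : Type} [TopologicalSpace X] {ℵ : Cardinal} (s : Set X)
    (h : tweight X < ℵ) : tweight s < ℵ := by
  obtain ⟨B, hB, hc⟩ := exists_basis_of_tweight_lt h
  exact lt_of_le_of_lt
    (le_trans (tweight_le_of_basis (isTopologicalBasis_subtype hB (· ∈ s))) (Cardinal.mk_image_le))
    hc

lemma isTopologicalBasis_sum {X Y : Type} [TopologicalSpace X] [TopologicalSpace Y]
    {BX : Set (Set X)} {BY : Set (Set Y)} (hX : IsTopologicalBasis BX)
    (hY : IsTopologicalBasis BY) :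
    IsTopologicalBasis (((Sum.inl '' ·) '' BX ∪ (Sum.inr '' ·) '' BY) : Set (Set (X ⊕ Y))) := by
  apply isTopologicalBasis_of_isOpen_of_nhds
  · rintro u (⟨v, hv, rfl⟩ | ⟨v, hv, rfl⟩)
    · exact isOpenMap_inl v (hX.isOpen hv)
    · exact isOpenMap_inr v (hY.isOpen hv)
  · rintro (x | y) u hxu hu
    · obtain ⟨v, hv, hxv, hvu⟩ := hX.exists_subset_of_mem_open
        (show x ∈ Sum.inl ⁻¹' u from hxu) (hu.preimage continuous_inl)
      exact ⟨Sum.inl '' v, Or.inl ⟨v, hv, rfl⟩, ⟨x, hxv, rfl⟩,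
        by rintro _ ⟨z, hz, rfl⟩; exact hvu hz⟩
    · obtain ⟨v, hv, hxv, hvu⟩ := hY.exists_subset_of_mem_open
        (show y ∈ Sum.inr ⁻¹' u from hxu) (hu.preimage continuous_inr)
      exact ⟨Sum.inr '' v, Or.inr ⟨v, hv, rfl⟩, ⟨y, hxv, rfl⟩,
        by rintro _ ⟨z, hz, rfl⟩; exact hvu hz⟩

lemma tweight_sum_lt {X Y : Type} [TopologicalSpace X] [TopologicalSpace Y] {ℵ : Cardinal}
    (hℵ : Cardinal.aleph0 ≤ ℵ) (hX : tweight X < ℵ) (hY : tweight Y < ℵ) :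
    tweight (X ⊕ Y) < ℵ := by
  obtain ⟨BX, hBX, hcX⟩ := exists_basis_of_tweight_lt hX
  obtain ⟨BY, hBY, hcY⟩ := exists_basis_of_tweight_lt hY
  refine lt_of_le_of_lt (tweight_le_of_basis (isTopologicalBasis_sum hBX hBY)) ?_
  refine lt_of_le_of_lt (Cardinal.mk_union_le _ _) ?_
  exact Cardinal.add_lt_of_lt hℵ
    (lt_of_le_of_lt Cardinal.mk_image_le hcX) (lt_of_le_of_lt Cardinal.mk_image_le hcY)

lemma tweight_pi_lt {ι X : Type} [TopologicalSpace X] [SecondCountableTopology X]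
    {ℵ : Cardinal} (hι : #ι < ℵ) (hℵ : Cardinal.aleph0 < ℵ) : tweight (ι → X) < ℵ := by
  classical
  obtain ⟨b, hbc, _, hbb⟩ := exists_countable_basis X
  -- enumeration of `insert ∅ b`
  obtain ⟨e, he⟩ := (hbc.insert ∅).exists_eq_range ⟨∅, mem_insert _ _⟩
  have heo : ∀ n, IsOpen (e n) := by
    intro n
    have : e n ∈ insert ∅ b := he ▸ mem_range_self n
    rcases this with h | h
    · simp [h]
    · exact hbb.isOpen h
  have heb : ∀ u ∈ b, ∃ n, e n = u := by
    intro u hu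
    have : u ∈ range e := he ▸ mem_insert_of_mem _ hu
    obtain ⟨n, hn⟩ := this
    exact ⟨n, hn⟩
  let ψ : Finset (ι × ℕ) → Set (ι → X) := fun s => ⋂ p ∈ s, (fun x => x p.1) ⁻¹' (e p.2)
  have hbasis : IsTopologicalBasis (range ψ) := by
    apply isTopologicalBasis_of_isOpen_of_nhds
    · rintro u ⟨s, rfl⟩
      exact isOpen_biInter_finset fun p _ => (heo p.2).preimage (continuous_apply p.1)
    · intro x u hxu hu
      obtain ⟨S, ⟨U, F, hUb, rfl⟩, hxS, hSu⟩ :=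
        (isTopologicalBasis_pi fun _ : ι => hbb).exists_subset_of_mem_open hxu hu
      choose n hn using fun (i : ι) (hi : i ∈ F) => heb (U i) (hUb i hi)
      refine ⟨ψ (F.attach.image fun i => (i.1, n i.1 i.2)), mem_range_self _, ?_, ?_⟩
      · simp only [ψ, mem_iInter, Finset.mem_image, Finset.mem_attach, true_and]
        rintro p ⟨⟨i, hi⟩, rfl⟩
        simpa [hn i hi] using hxS i hi
      · intro y hy
        apply hSu
        intro i hi
        simp only [ψ, mem_iInter, Finset.mem_image, Finset.mem_attach, true_and] at hy
        have := hy (i, n i hi) ⟨⟨i, hi⟩, rfl⟩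
        rwa [hn i hi] at this
  refine lt_of_le_of_lt (tweight_le_of_basis hbasis) ?_
  refine lt_of_le_of_lt Cardinal.mk_range_le ?_
  rcases finite_or_infinite (ι × ℕ) with h | h
  · haveI := Fintype.ofFinite (ι × ℕ)
    exact lt_trans (Cardinal.lt_aleph0_of_finite _) hℵ
  · rw [Cardinal.mk_finset_of_infinite]
    have : #(ι × ℕ) = #ι * aleph0 := by simp [Cardinal.mk_prod]
    rw [this]
    exact Cardinal.mul_lt_of_lt hℵ.le hι hℵ


section keytest
open Cardinal TopologicalSpace Set

lemma key_clopen (K : Type) [TopologicalSpace K] [CompactSpace K] [T2Space K]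
    (ℵ : Cardinal) (hℵ : Cardinal.aleph0 < ℵ)
    (hproj : ∀ (L M : Type) [TopologicalSpace L] [CompactSpace L] [T2Space L]
      [TopologicalSpace M] [CompactSpace M] [T2Space M],
      tweight L < ℵ → tweight M < ℵ →
      ∀ π : C(L, M), Function.Surjective π →
      ∀ f : C(K, M), ∃ g : C(K, L), ∀ x : K, π (g x) = f x)
    (G H : Set K) (hG : IsOpen G) (hH : IsOpen H) (hd : Disjoint G H)
    (hGU : UnionLtClosed K ℵ G) (hHU : UnionLtClosed K ℵ H) :
    ∃ c : Set K, IsClopen c ∧ G ⊆ c ∧ Disjoint H c := by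
  obtain ⟨ι, C, hι, hCcl, hCU⟩ := hGU
  obtain ⟨κ, D, hκ, hDcl, hDU⟩ := hHU
  have hCG : ∀ i, C i ⊆ G := fun i => hCU ▸ subset_iUnion C i
  have hDH : ∀ j, D j ⊆ H := fun j => hDU ▸ subset_iUnion D j
  -- Urysohn functions
  have hf : ∀ i : ι, ∃ f : C(K, ℝ), EqOn f 0 (C i) ∧ EqOn f 1 Gᶜ ∧ ∀ x, f x ∈ Icc (0:ℝ) 1 :=
    fun i => exists_continuous_zero_one_of_isClosed (hCcl i) hG.isClosed_compl
      (disjoint_compl_right.mono_left (hCG i))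
  choose f hf0 hf1 hfI using hf
  have hg : ∀ j : κ, ∃ g : C(K, ℝ), EqOn g 0 (D j) ∧ EqOn g 1 Hᶜ ∧ ∀ x, g x ∈ Icc (0:ℝ) 1 :=
    fun j => exists_continuous_zero_one_of_isClosed (hDcl j) hH.isClosed_compl
      (disjoint_compl_right.mono_left (hDH j))
  choose g hgD0 hgD1 hgI using hg
  let F : K → (ι ⊕ κ → unitInterval) := fun x =>
    Sum.elim (fun i => ⟨f i x, hfI i x⟩) (fun j => ⟨g j x, hgI j x⟩)
  have hFc : Continuous F := by
    apply continuous_pi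
    rintro (i | j)
    · exact ((f i).continuous.subtype_mk _)
    · exact ((g j).continuous.subtype_mk _)
  set A : Set (ι ⊕ κ → unitInterval) := F '' Hᶜ with hA
  set B : Set (ι ⊕ κ → unitInterval) := F '' Gᶜ with hB
  have hAco : IsCompact A := (hH.isClosed_compl.isCompact).image hFc
  have hBco : IsCompact B := (hG.isClosed_compl.isCompact).image hFc
  haveI : CompactSpace ↥A := isCompact_iff_compactSpace.mp hAco
  haveI : CompactSpace ↥B := isCompact_iff_compactSpace.mp hBco
  haveI : CompactSpace ↥(A ∪ B) := isCompact_iff_compactSpace.mp (hAco.union hBco)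
  have hpiw : tweight (ι ⊕ κ → unitInterval) < ℵ := by
    apply tweight_pi_lt _ hℵ
    rw [Cardinal.mk_sum]
    simpa using Cardinal.add_lt_of_lt hℵ.le hι hκ
  have hLw : tweight (↥A ⊕ ↥B) < ℵ :=
    tweight_sum_lt hℵ.le (tweight_subtype_lt A hpiw) (tweight_subtype_lt B hpiw)
  have hMw : tweight ↥(A ∪ B) < ℵ := tweight_subtype_lt _ hpiw
  let π : C(↥A ⊕ ↥B, ↥(A ∪ B)) :=
    ⟨Sum.elim (inclusion subset_union_left) (inclusion subset_union_right),
      (continuous_inclusion _).sumElim (continuous_inclusion _)⟩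
  have hπs : Function.Surjective π := by
    rintro ⟨m, hm | hm⟩
    · exact ⟨Sum.inl ⟨m, hm⟩, rfl⟩
    · exact ⟨Sum.inr ⟨m, hm⟩, rfl⟩
  have hmemF : ∀ x : K, F x ∈ A ∪ B := by
    intro x
    by_cases hx : x ∈ H
    · exact Or.inr ⟨x, fun hxG => hd.ne_of_mem hxG hx rfl, rfl⟩
    · exact Or.inl ⟨x, hx, rfl⟩
  let f0 : C(K, ↥(A ∪ B)) := ⟨fun x => ⟨F x, hmemF x⟩, hFc.subtype_mk _⟩
  obtain ⟨g0, hg0⟩ := hproj (↥A ⊕ ↥B) ↥(A ∪ B) hLw hMw π hπs f0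
  refine ⟨g0 ⁻¹' (range Sum.inl), isClopen_range_inl.preimage g0.continuous, ?_, ?_⟩
  · -- G ⊆ c
    intro x hx
    rcases hgx : g0 x with a | b
    · exact ⟨a, hgx.symm⟩
    · exfalso
      have h1 : (π (g0 x) : ι ⊕ κ → unitInterval) = F x := by rw [hg0 x]; rfl
      rw [hgx] at h1
      have h2 : (b : ι ⊕ κ → unitInterval) = F x := h1
      obtain ⟨y, hyG, hyF⟩ := b.prop
      have hFyx : F y = F x := by rw [hyF]; exact h2
      obtain ⟨i, hi⟩ := mem_iUnion.mp (hCU ▸ hx)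
      have e1 : f i x = 0 := hf0 i hi
      have e2 : f i y = 1 := hf1 i hyG
      have := congrFun hFyx (Sum.inl i)
      have : f i y = f i x := congrArg Subtype.val this
      rw [e1, e2] at this
      norm_num at this
  · -- Disjoint H c
    rw [Set.disjoint_left]
    rintro x hxH ⟨a, ha⟩
    have h1 : (π (g0 x) : ι ⊕ κ → unitInterval) = F x := by rw [hg0 x]; rfl
    rw [← ha] at h1
    have h2 : (a : ι ⊕ κ → unitInterval) = F x := h1
    obtain ⟨y, hyH, hyF⟩ := a.prop
    have hFyx : F y = F x := by rw [hyF]; exact h2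
    obtain ⟨j, hj⟩ := mem_iUnion.mp (hDU ▸ hxH)
    have e1 : g j x = 0 := hgD0 j hj
    have e2 : g j y = 1 := hgD1 j hyH
    have := congrFun hFyx (Sum.inr j)
    have : g j y = g j x := congrArg Subtype.val this
    rw [e1, e2] at this
    norm_num at this

end keytest
theorem stmt15
    (K : Type) [TopologicalSpace K] [CompactSpace K] [T2Space K]
    (ℵ : Cardinal) (hℵ : Cardinal.aleph0 < ℵ)
    (hproj : ∀ (L M : Type) [TopologicalSpace L] [CompactSpace L] [T2Space L]
      [TopologicalSpace M] [CompactSpace M] [T2Space M],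
      tweight L < ℵ → tweight M < ℵ →
      ∀ π : C(L, M), Function.Surjective π →
      ∀ f : C(K, M), ∃ g : C(K, L), ∀ x : K, π (g x) = f x) :
    TotallyDisconnectedSpace K ∧
    (∀ G H : Set K, IsOpen G → IsOpen H → Disjoint G H →
      UnionLtClosed K ℵ G → UnionLtClosed K ℵ H →
      ∃ c : Set K, IsClopen c ∧ G ⊆ c ∧ Disjoint H c) := by
  classical
  refine ⟨?_, fun G H hG hH hd h1 h2 => key_clopen K ℵ hℵ hproj G H hG hH hd h1 h2⟩
  haveI : TotallySeparatedSpace K := by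
    constructor
    intro x _ y _ hxy
    obtain ⟨φ, hφ0, hφ1, hφI⟩ := exists_continuous_zero_one_of_isClosed
      (isClosed_singleton (x := x)) (isClosed_singleton (x := y))
      (Set.disjoint_singleton.mpr hxy)
    set G : Set K := φ ⁻¹' (Set.Iio (1/3 : ℝ)) with hGdef
    set H : Set K := φ ⁻¹' (Set.Ioi (2/3 : ℝ)) with hHdef
    have hGo : IsOpen G := isOpen_Iio.preimage φ.continuous
    have hHo : IsOpen H := isOpen_Ioi.preimage φ.continuous
    have hdGH : Disjoint G H := by
      rw [Set.disjoint_left]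
      intro a haG haH
      have h1 : φ a < 1/3 := haG
      have h2 : (2/3 : ℝ) < φ a := haH
      linarith
    have hGU : UnionLtClosed K ℵ G := by
      refine ⟨ℚ, fun q => if (q : ℝ) < 1/3 then φ ⁻¹' (Set.Iic (q : ℝ)) else ∅,
        lt_of_le_of_lt Cardinal.mk_le_aleph0 hℵ, ?_, ?_⟩
      · intro q
        dsimp only
        split
        · exact isClosed_Iic.preimage φ.continuous
        · exact isClosed_empty
      · ext z
        simp only [Set.mem_iUnion]
        constructor
        · intro hz
          obtain ⟨q, hq1, hq2⟩ := exists_rat_btwn (show (φ z : ℝ) < 1/3 from hz)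
          exact ⟨q, by rw [if_pos hq2]; exact le_of_lt hq1⟩
        · rintro ⟨q, hq⟩
          by_cases h : (q : ℝ) < 1/3
          · rw [if_pos h] at hq
            exact lt_of_le_of_lt (show φ z ≤ (q:ℝ) from hq) h
          · rw [if_neg h] at hq
            exact absurd hq (Set.notMem_empty z)
    have hHU : UnionLtClosed K ℵ H := by
      refine ⟨ℚ, fun q => if (2/3 : ℝ) < (q : ℝ) then φ ⁻¹' (Set.Ici (q : ℝ)) else ∅,
        lt_of_le_of_lt Cardinal.mk_le_aleph0 hℵ, ?_, ?_⟩
      · intro q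
        dsimp only
        split
        · exact isClosed_Ici.preimage φ.continuous
        · exact isClosed_empty
      · ext z
        simp only [Set.mem_iUnion]
        constructor
        · intro hz
          obtain ⟨q, hq1, hq2⟩ := exists_rat_btwn (show (2/3 : ℝ) < φ z from hz)
          exact ⟨q, by rw [if_pos hq1]; exact le_of_lt hq2⟩
        · rintro ⟨q, hq⟩
          by_cases h : (2/3 : ℝ) < (q : ℝ)
          · rw [if_pos h] at hq
            exact lt_of_lt_of_le h (show (q:ℝ) ≤ φ z from hq)
          · rw [if_neg h] at hq
            exact absurd hq (Set.notMem_empty z)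
    obtain ⟨c, hc, hGc, hHc⟩ := key_clopen K ℵ hℵ hproj G H hGo hHo hdGH hGU hHU
    refine ⟨c, cᶜ, hc.isOpen, hc.compl.isOpen, ?_, ?_, by simp, disjoint_compl_right⟩
    · apply hGc
      have : φ x = 0 := hφ0 rfl
      show φ x < 1/3
      rw [this]; norm_num
    · have hyH : y ∈ H := by
        have : φ y = 1 := hφ1 rfl
        show (2/3:ℝ) < φ y
        rw [this]; norm_num
      exact Set.disjoint_left.mp hHc hyH
  infer_instance

end Aux
end

section
/- Let K be a zero-dimensional compact F_ℵ-space, M a compact Hausdorff space in HL_ℵ, L a closed subset of M × {0,1}, and π : L → M the first-coordinate projection, assumed surjective. Then every continuous map f : K → M lifts: there exists continuous g : K → L with π ∘ g = f. -/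
open Cardinal

/-- Pullback of a `UnionLtClosed` set along a continuous map. -/
lemma UnionLtClosed.preimage {K M : Type} [TopologicalSpace K] [TopologicalSpace M]
    {ℵ : Cardinal} {s : Set M} (h : UnionLtClosed M ℵ s) (f : C(K, M)) :
    UnionLtClosed K ℵ (f ⁻¹' s) := by
  obtain ⟨ι, C, hι, hC, rfl⟩ := h
  exact ⟨ι, fun i => f ⁻¹' C i, hι, fun i => (hC i).preimage f.continuous,
    by simp [Set.preimage_iUnion]⟩

/-- In a compact Hausdorff totally disconnected space, a closed set contained in an
open set is contained in a clopen set contained in the open set. -/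
lemma exists_isClopen_between {X : Type} [TopologicalSpace X] [CompactSpace X] [T2Space X]
    [TotallyDisconnectedSpace X] {A U : Set X} (hA : IsClosed A) (hU : IsOpen U)
    (hAU : A ⊆ U) : ∃ V : Set X, IsClopen V ∧ A ⊆ V ∧ V ⊆ U := by
  choose W hW hxW hWU using fun (x : A) => compact_exists_isClopen_in_isOpen hU (hAU x.2)
  obtain ⟨t, ht⟩ := (hA.isCompact).elim_finite_subcover (fun x : A => W x)
    (fun x => (hW x).2) (fun x hx => Set.mem_iUnion.2 ⟨⟨x, hx⟩, hxW _⟩)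
  refine ⟨⋃ x ∈ t, W x, t.finite_toSet.isClopen_biUnion (fun x _ => hW x), ht, ?_⟩
  exact Set.iUnion₂_subset fun x _ => hWU x

theorem stmt16
    (ℵ : Cardinal) (hℵ : Cardinal.aleph0 < ℵ)
    (K : Type) [TopologicalSpace K] [CompactSpace K] [T2Space K]
    [TotallyDisconnectedSpace K]
    -- K is an F_ℵ-space
    (hK : ∀ G H : Set K, IsOpen G → IsOpen H → Disjoint G H →
      UnionLtClosed K ℵ G → UnionLtClosed K ℵ H →
      Disjoint (closure G) (closure H))
    (M : Type) [TopologicalSpace M] [CompactSpace M] [T2Space M]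
    -- M belongs to HL_ℵ
    (hM : ∀ V : Set M, IsOpen V → UnionLtClosed M ℵ V)
    (L : Set (M × Bool)) (hL : IsClosed L)
    (hsurj : ∀ m : M, ∃ b : Bool, (m, b) ∈ L)
    (f : C(K, M)) :
    ∃ g : C(K, L), ∀ x : K, ((g x : M × Bool)).1 = f x := by
  classical
  -- The sets where `false` (resp. `true`) is an allowed second coordinate.
  set M₀ : Set M := {m | (m, false) ∈ L} with hM₀def
  set M₁ : Set M := {m | (m, true) ∈ L} with hM₁def
  have hM₀ : IsClosed M₀ := hL.preimage (Continuous.prodMk_left false)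
  have hM₁ : IsClosed M₁ := hL.preimage (Continuous.prodMk_left true)
  have hcover : ∀ m : M, m ∈ M₀ ∨ m ∈ M₁ := by
    intro m; obtain ⟨b, hb⟩ := hsurj m
    cases b with
    | false => exact Or.inl hb
    | true => exact Or.inr hb
  -- `A` : points forced to take `false`, `B` : points forced to take `true`.
  set A : Set K := f ⁻¹' M₁ᶜ with hAdef
  set B : Set K := f ⁻¹' M₀ᶜ with hBdef
  have hAopen : IsOpen A := hM₁.isOpen_compl.preimage f.continuous
  have hBopen : IsOpen B := hM₀.isOpen_compl.preimage f.continuous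
  have hAB : Disjoint A B := by
    rw [Set.disjoint_left]
    intro x hxA hxB
    rcases hcover (f x) with h | h
    · exact hxB h
    · exact hxA h
  have hdisj : Disjoint (closure A) (closure B) :=
    hK A B hAopen hBopen hAB ((hM _ hM₁.isOpen_compl).preimage f)
      ((hM _ hM₀.isOpen_compl).preimage f)
  obtain ⟨V, hV, hAV, hVB⟩ := exists_isClopen_between isClosed_closure
    (isClosed_closure (s := B)).isOpen_compl
    (Set.disjoint_left.mp hdisj)
  -- define the lift
  have hmem : ∀ x : K, (f x, if x ∈ V then false else true) ∈ L := by
    intro x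
    by_cases hx : x ∈ V
    · rw [if_pos hx]
      have hxB : x ∉ B := fun h => hVB hx (subset_closure h)
      have : f x ∈ M₀ := by
        by_contra h; exact hxB h
      exact this
    · rw [if_neg hx]
      have hxA : x ∉ A := fun h => hx (hAV (subset_closure h))
      have : f x ∈ M₁ := by
        by_contra h; exact hxA h
      exact this
  have hcont : Continuous fun x : K => (if x ∈ V then false else true : Bool) := by
    have : (fun x : K => (if x ∈ V then false else true : Bool)) =
        V.piecewise (fun _ => false) (fun _ => true) := rfl
    rw [this]
    exact continuous_const.piecewise (fun a ha => absurd ha (by rw [hV.frontier_eq]; exact Set.notMem_empty a)) continuous_const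
  refine ⟨⟨fun x => ⟨(f x, if x ∈ V then false else true), hmem x⟩, ?_⟩, fun x => rfl⟩
  exact Continuous.subtype_mk (f.continuous.prodMk hcont) _
end

section
/- There is no continuous map g : K → βℕ with π ∘ g = f, whenever K is a compact Hausdorff space that does not map continuously onto βℕ, f : K → αℕ is a continuous surjection onto the one-point compactification of ℕ, and π : βℕ → αℕ is the canonical map fixing ℕ and sending βℕ∖ℕ to the point at infinity. In fact, any continuous g : K → βℕ with π ∘ g = f must be surjective. -/
open Cardinal OnePoint

theorem stmt17
    (K : Type) [TopologicalSpace K] [CompactSpace K] [T2Space K]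
    (hK : ¬ ∃ φ : C(K, StoneCech ℕ), Function.Surjective φ)
    (f : C(K, OnePoint ℕ)) (hf : Function.Surjective f)
    (π : C(StoneCech ℕ, OnePoint ℕ))
    (hπ₁ : ∀ n : ℕ, π (stoneCechUnit n) = (n : OnePoint ℕ))
    (hπ₂ : ∀ x : StoneCech ℕ, (∀ n : ℕ, x ≠ stoneCechUnit n) → π x = ∞) :
    (∀ g : C(K, StoneCech ℕ), (∀ x : K, π (g x) = f x) → Function.Surjective g) ∧
    ¬ ∃ g : C(K, StoneCech ℕ), ∀ x : K, π (g x) = f x := by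
  have main : ∀ g : C(K, StoneCech ℕ), (∀ x : K, π (g x) = f x) →
      Function.Surjective g := by
    intro g hg
    -- range g contains all stoneCechUnit n
    have hsub : Set.range (stoneCechUnit : ℕ → StoneCech ℕ) ⊆ Set.range g := by
      rintro _ ⟨n, rfl⟩
      obtain ⟨x, hx⟩ := hf (n : OnePoint ℕ)
      refine ⟨x, ?_⟩
      by_contra hne
      rcases Classical.em (∃ m : ℕ, g x = stoneCechUnit m) with ⟨m, hm⟩ | h
      · have : π (g x) = (m : OnePoint ℕ) := by rw [hm, hπ₁]
        rw [hg x, hx] at this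
        have : m = n := by exact_mod_cast this.symm
        exact hne (by rw [hm, this])
      · push_neg at h
        have : π (g x) = ∞ := hπ₂ _ h
        rw [hg x, hx] at this
        exact Option.some_ne_none n this
    have hclosed : IsClosed (Set.range g) :=
      (isCompact_range g.continuous).isClosed
    have hdense : Dense (Set.range (stoneCechUnit : ℕ → StoneCech ℕ)) :=
      denseRange_stoneCechUnit
    have : Set.range g = Set.univ := by
      have := hclosed.closure_eq ▸ closure_mono hsub
      simpa [hdense.closure_eq, hclosed.closure_eq] using this
    exact Set.range_eq_univ.mp this
  refine ⟨main, ?_⟩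
  rintro ⟨g, hg⟩
  exact hK ⟨g, main g hg⟩
end

section
/- Let K be a compact Hausdorff space such that for every continuous affine surjection π : L → M between compact convex subsets of locally convex spaces with w(L) < ℵ, every continuous f : K → M lifts through π. Then K is an F_ℵ-space: for any families (f_α)_{α<Γ}, (g_α)_{α<Γ} in C(K, [0,1]) with Γ < ℵ and f_α ≤ g_β for all α, β, there exists a continuous h : K → [0,1] with f_α ≤ h ≤ g_α for all α. -/
open Cardinal

open TopologicalSpace Set

lemma mk_finset_lt {X : Type} {ℵ : Cardinal} (h0 : ℵ₀ ≤ ℵ) (hX : #X < ℵ) :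
    #(Finset X) < ℵ := by
  cases finite_or_infinite X with
  | inl h =>
    haveI := h; haveI := Fintype.ofFinite X
    exact lt_of_lt_of_le (Cardinal.lt_aleph0_of_finite _) h0
  | inr h => rwa [Cardinal.mk_finset_of_infinite]

lemma tweight_pi_lt_s18 (X : Type) (S : Set (X → ℝ)) {ℵ : Cardinal}
    (h0 : ℵ₀ < ℵ) (hX : #X < ℵ) : tweight S < ℵ := by
  classical
  obtain ⟨b, hbc, -, hb⟩ := exists_countable_basis ℝ
  have hBpi : IsTopologicalBasis {T : Set (X → ℝ) | ∃ (U : X → Set ℝ) (F : Finset X),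
      (∀ i ∈ F, U i ∈ b) ∧ T = (↑F : Set X).pi U} := isTopologicalBasis_pi fun _ => hb
  have hsub : IsTopologicalBasis ((Set.preimage (Subtype.val : S → (X → ℝ))) '' _) :=
    hBpi.isInducing Topology.IsInducing.subtypeVal
  refine lt_of_le_of_lt (le_trans (tweight_le_of_basis hsub) (Cardinal.mk_image_le)) ?_
  haveI : Countable b := hbc.to_subtype
  have hsurj : ∃ e : (Σ F : Finset X, (F → b)) →
      {T : Set (X → ℝ) | ∃ (U : X → Set ℝ) (F : Finset X),
        (∀ i ∈ F, U i ∈ b) ∧ T = (↑F : Set X).pi U},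
      Function.Surjective e := by
    refine ⟨fun p => ⟨(↑p.1 : Set X).pi (fun i => if h : i ∈ p.1 then (p.2 ⟨i, h⟩ : Set ℝ) else univ),
      ⟨_, p.1, fun i hi => by rw [dif_pos hi]; exact (p.2 ⟨i, hi⟩).2, rfl⟩⟩, ?_⟩
    rintro ⟨T, U, F, hU, rfl⟩
    refine ⟨⟨F, fun i => ⟨U i, hU i i.2⟩⟩, Subtype.ext ?_⟩
    refine (Set.pi_congr rfl fun i hi => ?_).symm
    rw [Finset.mem_coe] at hi
    show U i = if _h : i ∈ F then U i else Set.univ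
    rw [dif_pos hi]
  obtain ⟨e, he⟩ := hsurj
  refine lt_of_le_of_lt (Cardinal.mk_le_of_surjective he) ?_
  have h1 : #(Σ F : Finset X, (F → b)) ≤ #(Finset X) * ℵ₀ := by
    rw [Cardinal.mk_sigma]
    have := Cardinal.sum_le_sum (fun F : Finset X => #(F → b)) (fun _ => ℵ₀)
      (fun F => Cardinal.mk_le_aleph0)
    simpa [Cardinal.sum_const] using this
  exact lt_of_le_of_lt h1 (Cardinal.mul_lt_of_lt h0.le (mk_finset_lt h0.le hX) h0)

abbrev Idx (Γ : Type) : Type := Γ ⊕ Unit ⊕ Γ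

def mid (Γ : Type) : Idx Γ := Sum.inr (Sum.inl ())

def zm {Γ : Type} (p : Idx Γ → ℝ) : Idx Γ → ℝ
  | Sum.inl a => p (Sum.inl a)
  | Sum.inr (Sum.inl _) => 0
  | Sum.inr (Sum.inr a) => p (Sum.inr (Sum.inr a))

def Lset (Γ : Type) : Set (Idx Γ → ℝ) :=
  {p | (∀ i, p i ∈ Icc (0:ℝ) 1) ∧ (∀ α : Γ, p (Sum.inl α) ≤ p (mid Γ)) ∧
    (∀ α : Γ, p (mid Γ) ≤ p (Sum.inr (Sum.inr α)))}

def Mset (Γ : Type) : Set (Idx Γ → ℝ) := zm '' Lset Γ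

def zmₗ (Γ : Type) : (Idx Γ → ℝ) →ₗ[ℝ] (Idx Γ → ℝ) where
  toFun := zm
  map_add' p q := by
    funext i
    rcases i with a | u | a <;> simp [zm]
  map_smul' c p := by
    funext i
    rcases i with a | u | a <;> simp [zm]

lemma zm_cont (Γ : Type) : Continuous (zm (Γ := Γ)) := by
  refine continuous_pi fun i => ?_
  rcases i with a | u | a
  · exact continuous_apply (Sum.inl a)
  · exact continuous_const
  · exact continuous_apply (Sum.inr (Sum.inr a))

lemma Lset_closed (Γ : Type) : IsClosed (Lset Γ) := by
  have : Lset Γ = (⋂ i, (fun p : Idx Γ → ℝ => p i) ⁻¹' Icc (0:ℝ) 1) ∩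
      ((⋂ α : Γ, {p : Idx Γ → ℝ | p (Sum.inl α) ≤ p (mid Γ)}) ∩
       (⋂ α : Γ, {p : Idx Γ → ℝ | p (mid Γ) ≤ p (Sum.inr (Sum.inr α))})) := by
    ext p
    simp [Lset, Set.mem_iInter, Set.mem_inter_iff]
  rw [this]
  refine IsClosed.inter (isClosed_iInter fun i => isClosed_Icc.preimage (continuous_apply i))
    (IsClosed.inter (isClosed_iInter fun α => isClosed_le (continuous_apply _) (continuous_apply _))
      (isClosed_iInter fun α => isClosed_le (continuous_apply _) (continuous_apply _)))

lemma Lset_compact (Γ : Type) : IsCompact (Lset Γ) := by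
  have hsub : Lset Γ ⊆ Set.pi univ (fun _ : Idx Γ => Icc (0:ℝ) 1) :=
    fun p hp i _ => hp.1 i
  exact IsCompact.of_isClosed_subset (isCompact_univ_pi fun _ => isCompact_Icc)
    (Lset_closed Γ) hsub

lemma Lset_convex (Γ : Type) : Convex ℝ (Lset Γ) := by
  rintro p hp q hq a b ha hb hab
  refine ⟨fun i => ?_, fun α => ?_, fun α => ?_⟩
  · have := (convex_Icc (0:ℝ) 1) (hp.1 i) (hq.1 i) ha hb hab
    simpa using this
  · have := add_le_add (mul_le_mul_of_nonneg_left (hp.2.1 α) ha)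
      (mul_le_mul_of_nonneg_left (hq.2.1 α) hb)
    simpa using this
  · have := add_le_add (mul_le_mul_of_nonneg_left (hp.2.2 α) ha)
      (mul_le_mul_of_nonneg_left (hq.2.2 α) hb)
    simpa using this

lemma Mset_compact (Γ : Type) : IsCompact (Mset Γ) :=
  (Lset_compact Γ).image (zm_cont Γ)

lemma Mset_convex (Γ : Type) : Convex ℝ (Mset Γ) :=
  (Lset_convex Γ).linear_image (zmₗ Γ)

def πmap (Γ : Type) : C(Lset Γ, Mset Γ) :=
  ⟨fun p => ⟨zm p.1, p.1, p.2, rfl⟩,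
    Continuous.subtype_mk ((zm_cont Γ).comp continuous_subtype_val) _⟩

lemma πmap_surj (Γ : Type) : Function.Surjective (πmap Γ) := by
  rintro ⟨q, p, hp, rfl⟩
  exact ⟨⟨p, hp⟩, rfl⟩

lemma zm_affine (Γ : Type) (x y : Idx Γ → ℝ) (t : ℝ) :
    zm (t • x + (1 - t) • y) = t • zm x + (1 - t) • zm y := by
  funext i
  rcases i with a | u | a <;> simp [zm]

theorem stmt18
    (K : Type) [TopologicalSpace K] [CompactSpace K] [T2Space K]
    (ℵ : Cardinal) (hℵ : Cardinal.aleph 1 ≤ ℵ)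
    -- K is projective with respect to continuous affine surjections between compact convex
    -- subsets of locally convex spaces, with domain of weight < ℵ
    (hproj : ∀ (V W : Type)
      [AddCommGroup V] [Module ℝ V] [TopologicalSpace V]
      [IsTopologicalAddGroup V] [ContinuousSMul ℝ V] [LocallyConvexSpace ℝ V]
      [AddCommGroup W] [Module ℝ W] [TopologicalSpace W]
      [IsTopologicalAddGroup W] [ContinuousSMul ℝ W] [LocallyConvexSpace ℝ W]
      (L : Set V) (M : Set W), IsCompact L → Convex ℝ L → IsCompact M → Convex ℝ M →
      tweight L < ℵ →
      ∀ π : C(L, M), Function.Surjective π →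
      (∀ (x y : L) (t : ℝ), 0 ≤ t → t ≤ 1 →
        ∀ hz : t • (x : V) + (1 - t) • (y : V) ∈ L,
          ((π ⟨t • (x : V) + (1 - t) • (y : V), hz⟩ : M) : W)
            = t • ((π x : M) : W) + (1 - t) • ((π y : M) : W)) →
      ∀ f : C(K, M), ∃ g : C(K, L), ∀ x : K, π (g x) = f x) :
    ∀ (Γ : Type), #Γ < ℵ → ∀ f g : Γ → C(K, ℝ),
      (∀ α (x : K), f α x ∈ Set.Icc (0 : ℝ) 1) →
      (∀ α (x : K), g α x ∈ Set.Icc (0 : ℝ) 1) →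
      (∀ α β, f α ≤ g β) →
      ∃ h : C(K, ℝ), (∀ x : K, h x ∈ Set.Icc (0 : ℝ) 1) ∧
        ∀ α, f α ≤ h ∧ h ≤ g α := by
  intro Γ hΓ f g hf hg hfg
  have h0 : ℵ₀ < ℵ := lt_of_lt_of_le Cardinal.aleph0_lt_aleph_one hℵ
  -- cardinality of the index type
  have hI : #(Idx Γ) < ℵ := by
    have h1 : (#Unit : Cardinal) < ℵ := lt_trans (Cardinal.lt_aleph0_of_finite _) h0
    have := Cardinal.add_lt_of_lt h0.le hΓ (Cardinal.add_lt_of_lt h0.le h1 hΓ)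
    simpa [Cardinal.mk_sum] using this
  -- the weight bound
  have hw : tweight (Lset Γ) < ℵ := tweight_pi_lt_s18 (Idx Γ) (Lset Γ) h0 hI
  -- affinity of πmap
  have haff : ∀ (x y : Lset Γ) (t : ℝ), 0 ≤ t → t ≤ 1 →
      ∀ hz : t • (x : Idx Γ → ℝ) + (1 - t) • (y : Idx Γ → ℝ) ∈ Lset Γ,
        ((πmap Γ ⟨t • (x : Idx Γ → ℝ) + (1 - t) • (y : Idx Γ → ℝ), hz⟩ : Mset Γ) : Idx Γ → ℝ)
          = t • ((πmap Γ x : Mset Γ) : Idx Γ → ℝ) + (1 - t) • ((πmap Γ y : Mset Γ) : Idx Γ → ℝ) :=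
    fun x y t _ _ _ => zm_affine Γ x y t
  -- the map F : K → Mset Γ
  set r : K → ℝ := fun x => sSup (insert 0 (Set.range fun α => f α x)) with hr
  have hbdd : ∀ x : K, BddAbove (insert 0 (Set.range fun α => f α x)) := by
    intro x
    refine ⟨1, ?_⟩
    rintro y (rfl | ⟨α, rfl⟩)
    · exact zero_le_one
    · exact (hf α x).2
  have hr0 : ∀ x, 0 ≤ r x := fun x => le_csSup (hbdd x) (Set.mem_insert _ _)
  have hr1 : ∀ x, r x ≤ 1 := by
    intro x
    refine csSup_le ⟨0, Set.mem_insert _ _⟩ ?_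
    rintro y (rfl | ⟨α, rfl⟩)
    · exact zero_le_one
    · exact (hf α x).2
  have hfr : ∀ α x, f α x ≤ r x :=
    fun α x => le_csSup (hbdd x) (Set.mem_insert_of_mem _ ⟨α, rfl⟩)
  have hrg : ∀ α x, r x ≤ g α x := by
    intro α x
    refine csSup_le ⟨0, Set.mem_insert _ _⟩ ?_
    rintro y (rfl | ⟨β, rfl⟩)
    · exact (hg α x).1
    · exact hfg β α x
  -- the witness point in Lset
  set P : K → (Idx Γ → ℝ) := fun x =>
    Sum.elim (fun α => f α x) (Sum.elim (fun _ => r x) (fun α => g α x)) with hP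
  have hPL : ∀ x, P x ∈ Lset Γ := by
    intro x
    refine ⟨fun i => ?_, fun α => hfr α x, fun α => hrg α x⟩
    rcases i with a | u | a
    · exact hf a x
    · exact ⟨hr0 x, hr1 x⟩
    · exact hg a x
  -- the target map raw point
  set Q : K → (Idx Γ → ℝ) := fun x =>
    Sum.elim (fun α => f α x) (Sum.elim (fun _ => 0) (fun α => g α x)) with hQ
  have hzmPQ : ∀ x, zm (P x) = Q x := by
    intro x
    funext i
    rcases i with a | u | a <;> rfl
  have hQM : ∀ x, Q x ∈ Mset Γ := fun x => ⟨P x, hPL x, hzmPQ x⟩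
  have hQcont : Continuous Q := by
    refine continuous_pi fun i => ?_
    rcases i with a | u | a
    · exact (f a).continuous
    · exact continuous_const
    · exact (g a).continuous
  set F : C(K, Mset Γ) := ⟨fun x => ⟨Q x, hQM x⟩, hQcont.subtype_mk _⟩ with hF
  obtain ⟨G, hG⟩ := hproj (Idx Γ → ℝ) (Idx Γ → ℝ) (Lset Γ) (Mset Γ)
    (Lset_compact Γ) (Lset_convex Γ) (Mset_compact Γ) (Mset_convex Γ) hw
    (πmap Γ) (πmap_surj Γ) haff F
  -- extract the middle coordinate
  refine ⟨⟨fun x => ((G x : Lset Γ) : Idx Γ → ℝ) (mid Γ),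
    (continuous_apply (mid Γ)).comp (continuous_subtype_val.comp G.continuous)⟩, ?_, ?_⟩
  · intro x
    exact (G x).2.1 (mid Γ)
  · intro α
    have key : ∀ x : K, zm ((G x : Lset Γ) : Idx Γ → ℝ) = Q x := by
      intro x
      have := hG x
      exact congrArg Subtype.val this
    constructor
    · intro x
      have h1 : ((G x : Lset Γ) : Idx Γ → ℝ) (Sum.inl α) = f α x := by
        have := congrFun (key x) (Sum.inl α)
        simpa [zm, hQ] using this
      calc f α x = ((G x : Lset Γ) : Idx Γ → ℝ) (Sum.inl α) := h1.symm
        _ ≤ ((G x : Lset Γ) : Idx Γ → ℝ) (mid Γ) := (G x).2.2.1 α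
    · intro x
      have h1 : ((G x : Lset Γ) : Idx Γ → ℝ) (Sum.inr (Sum.inr α)) = g α x := by
        have := congrFun (key x) (Sum.inr (Sum.inr α))
        simpa [zm, hQ] using this
      calc ((G x : Lset Γ) : Idx Γ → ℝ) (mid Γ)
          ≤ ((G x : Lset Γ) : Idx Γ → ℝ) (Sum.inr (Sum.inr α)) := (G x).2.2.2 α
        _ = g α x := h1
end
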